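/- arXiv:2011.08572 — 5 statements merged into one kernel-verified Lean document; each statement's English description precedes it below -/
import Mathlib

section
/- Let H_c be a k-local classical Hamiltonian on n bits with T terms in which each bit is acted on by at most k' terms, and let |ψ⟩ be its coherent Gibbs state. Then there exists a (k'(k−1)+1)-local stoquastic frustration-free Hamiltonian H_SFF on n qubits, a sum of n terms (one for each qubit, namely Γ_j − X_j where X_j is the Pauli X on qubit j and Γ_j = X_j e^(−H_c/2) X_j e^(H_c/2) with H_c viewed as a diagonal operator), whose unique ground state (up to phase) is |ψ⟩, with ground energy 0. -/
open scoped BigOperators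

namespace StoqPaper

/-- The real value (0 or 1) of a bit. -/
def bv (b : Bool) : ℝ := if b then 1 else 0

/-- The ℓ² norm of a finitely-indexed family of complex numbers. -/
noncomputable def l2norm {α : Type*} [Fintype α] (v : α → ℂ) : ℝ :=
  Real.sqrt (∑ x, Complex.normSq (v x))

/-- The inner product ⟨v|w⟩ (antilinear in the first slot). -/
noncomputable def qInner {α : Type*} [Fintype α] (v w : α → ℂ) : ℂ :=
  ∑ x, (starRingEnd ℂ) (v x) * w x

/-- `‖M‖_op ≤ J` for the ℓ²-operator norm, stated via its universal property. -/
def OpNormLE {α : Type*} [Fintype α] (M : Matrix α α ℂ) (J : ℝ) : Prop :=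
  ∀ v : α → ℂ, l2norm (M.mulVec v) ≤ J * l2norm v

/-- The uniform superposition state |+⟩ on qubits indexed by `ι`. -/
noncomputable def plusState (ι : Type*) [Fintype ι] : (ι → Bool) → ℂ :=
  fun _ => ((Real.sqrt (2 ^ Fintype.card ι) : ℝ)⁻¹ : ℝ)

variable {ι : Type*} [Fintype ι] [DecidableEq ι]

/-- A matrix on qubits indexed by `ι` acts nontrivially only on the qubit set `S`:
entries vanish unless the two configurations agree outside `S`, and entries depend
only on the restrictions of the two configurations to `S`. -/
def LocalOn (S : Finset ι) (M : Matrix (ι → Bool) (ι → Bool) ℂ) : Prop :=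
  (∀ x y : ι → Bool, (∃ i, i ∉ S ∧ x i ≠ y i) → M x y = 0) ∧
  (∀ x y x' y' : ι → Bool, (∀ i ∈ S, x i = x' i) → (∀ i ∈ S, y i = y' i) →
    (∀ i, i ∉ S → x i = y i) → (∀ i, i ∉ S → x' i = y' i) → M x y = M x' y')

/-- A matrix is `k`-local if it acts nontrivially on at most `k` qubits. -/
def KLocal (k : ℕ) (M : Matrix (ι → Bool) (ι → Bool) ℂ) : Prop :=
  ∃ S : Finset ι, S.card ≤ k ∧ LocalOn S M

/-- A `k`-local matrix all of whose local-matrix entries are real and strictly positive. -/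
def KLocalPositive (k : ℕ) (M : Matrix (ι → Bool) (ι → Bool) ℂ) : Prop :=
  ∃ S : Finset ι, S.card ≤ k ∧ LocalOn S M ∧
    ∀ x y : ι → Bool, (∀ i, i ∉ S → x i = y i) → (M x y).im = 0 ∧ 0 < (M x y).re

/-- Stoquastic entries: all entries real, and off-diagonal entries nonpositive. -/
def StoqEntries (M : Matrix (ι → Bool) (ι → Bool) ℂ) : Prop :=
  ∀ x y : ι → Bool, (M x y).im = 0 ∧ (x ≠ y → (M x y).re ≤ 0)

/-- `μ` is a (real) eigenvalue of `M`. -/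
def IsEig {α : Type*} [Fintype α] (M : Matrix α α ℂ) (μ : ℝ) : Prop :=
  ∃ v : α → ℂ, v ≠ 0 ∧ M.mulVec v = (μ : ℂ) • v

/-- `E` is the smallest (real) eigenvalue of `M` (the ground energy). -/
def IsGroundEnergy {α : Type*} [Fintype α] (M : Matrix α α ℂ) (E : ℝ) : Prop :=
  IsEig M E ∧ ∀ μ : ℝ, IsEig M μ → E ≤ μ

/-- Every eigenvalue of `M` is either the ground energy `E` or at least `E + Δ`:
the energy gap of `M` is at least `Δ`. -/
def GapAtLeast {α : Type*} [Fintype α] (M : Matrix α α ℂ) (E Δ : ℝ) : Prop :=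
  ∀ μ : ℝ, IsEig M μ → μ = E ∨ E + Δ ≤ μ

/-- `P` is the orthogonal projector onto the `E`-eigenspace of `M`:
it is Hermitian, idempotent, and its fixed space is exactly that eigenspace. -/
def IsGroundProjector {α : Type*} [Fintype α] (M P : Matrix α α ℂ) (E : ℝ) : Prop :=
  P.IsHermitian ∧ P * P = P ∧
    ∀ v : α → ℂ, M.mulVec v = (E : ℂ) • v ↔ P.mulVec v = v

/-- A function of bit configurations depends only on the bits in `S`. -/
def DependsOnlyOn (S : Finset ι) (f : (ι → Bool) → ℝ) : Prop :=
  ∀ y y' : ι → Bool, (∀ i ∈ S, y i = y' i) → f y = f y'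

/-- The Gibbs distribution (at temperature 1) of a classical Hamiltonian. -/
noncomputable def gibbs (Hc : (ι → Bool) → ℝ) (y : ι → Bool) : ℝ :=
  Real.exp (-(Hc y)) / ∑ z, Real.exp (-(Hc z))

/-- Total variation distance between two real functions on a finite set. -/
noncomputable def tvDist {α : Type*} [Fintype α] (p q : α → ℝ) : ℝ :=
  (1 / 2) * ∑ x, |p x - q x|

/-- A Hyper Boltzmann Machine with `n` visible nodes, `m` hidden nodes
and `T` hyperedges. -/
structure HBM (n m T : ℕ) where
  /-- the set of nodes of each hyperedge -/
  edge : Fin T → Finset (Fin n ⊕ Fin m)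
  /-- the local energy of each hyperedge -/
  F : Fin T → ((Fin n ⊕ Fin m) → Bool) → ℝ
  /-- each local energy depends only on the bits at the nodes of its hyperedge -/
  F_local : ∀ t, DependsOnlyOn (edge t) (F t)

namespace HBM

variable {n m T : ℕ}

/-- An HBM is `k`-local if every hyperedge contains at most `k` nodes. -/
def IsKLocal (M : HBM n m T) (k : ℕ) : Prop := ∀ t, (M.edge t).card ≤ k

/-- The number of hyperedges containing a given node. -/
def deg (M : HBM n m T) (v : Fin n ⊕ Fin m) : ℕ :=
  (Finset.univ.filter (fun t => v ∈ M.edge t)).card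

/-- The output of the HBM: hidden variables summed out of the Boltzmann weight. -/
noncomputable def output (M : HBM n m T) (x : Fin n → Bool) : ℝ :=
  ∑ h : Fin m → Bool, Real.exp (-(∑ t, M.F t (Sum.elim x h)))

/-- The probability distribution of the HBM on visible configurations. -/
noncomputable def dist (M : HBM n m T) (x : Fin n → Bool) : ℝ :=
  M.output x / ∑ y, M.output y

/-- The HBM represents the state `ψ` to precision `ε` in distribution. -/
noncomputable def RepDist (M : HBM n m T) (ψ : (Fin n → Bool) → ℂ) (ε : ℝ) : Prop :=
  tvDist M.dist (fun x => Complex.normSq (ψ x)) ≤ ε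

end HBM

/-- A Deep Boltzmann Machine with `n` visible nodes, `m₁` middle-layer hidden nodes and
`m₂` deep-layer hidden nodes; edges run only between consecutive layers. -/
structure DBM (n m₁ m₂ : ℕ) where
  /-- biases of the visible nodes -/
  a : Fin n → ℝ
  /-- biases of the middle hidden nodes -/
  b : Fin m₁ → ℝ
  /-- biases of the deep hidden nodes -/
  c : Fin m₂ → ℝ
  /-- weights between visible and middle layers -/
  W : Fin n → Fin m₁ → ℝ
  /-- weights between middle and deep layers -/
  U : Fin m₁ → Fin m₂ → ℝ

namespace DBM

variable {n m₁ m₂ : ℕ}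

/-- The energy of a configuration of a DBM. -/
noncomputable def energy (D : DBM n m₁ m₂) (x : Fin n → Bool) (h : Fin m₁ → Bool)
    (g : Fin m₂ → Bool) : ℝ :=
  -(∑ i, D.a i * bv (x i)) - (∑ j, D.b j * bv (h j)) - (∑ l, D.c l * bv (g l))
    - (∑ i, ∑ j, D.W i j * bv (x i) * bv (h j))
    - (∑ j, ∑ l, D.U j l * bv (h j) * bv (g l))

/-- The output of a DBM. -/
noncomputable def output (D : DBM n m₁ m₂) (x : Fin n → Bool) : ℝ :=
  ∑ h : Fin m₁ → Bool, ∑ g : Fin m₂ → Bool, Real.exp (-(D.energy x h g))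

/-- The probability distribution of a DBM on visible configurations. -/
noncomputable def dist (D : DBM n m₁ m₂) (x : Fin n → Bool) : ℝ :=
  D.output x / ∑ y, D.output y

open Classical in
/-- The number of connections (degree) of a visible node. -/
noncomputable def degVis (D : DBM n m₁ m₂) (i : Fin n) : ℕ :=
  (Finset.univ.filter (fun j => D.W i j ≠ 0)).card

open Classical in
/-- The number of connections (degree) of a middle-layer hidden node. -/
noncomputable def degMid (D : DBM n m₁ m₂) (j : Fin m₁) : ℕ :=
  (Finset.univ.filter (fun i => D.W i j ≠ 0)).card
    + (Finset.univ.filter (fun l => D.U j l ≠ 0)).card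

open Classical in
/-- The number of connections (degree) of a deep-layer hidden node. -/
noncomputable def degDeep (D : DBM n m₁ m₂) (l : Fin m₂) : ℕ :=
  (Finset.univ.filter (fun j => D.U j l ≠ 0)).card

end DBM

/-- A (general) Boltzmann machine on `n` visible and `m` hidden nodes: a graph with
real biases on the nodes and real weights on the edges. -/
structure BM (n m : ℕ) where
  /-- biases -/
  a : (Fin n ⊕ Fin m) → ℝ
  /-- weights (zero weight = no edge) -/
  W : (Fin n ⊕ Fin m) → (Fin n ⊕ Fin m) → ℝ
  /-- weights are symmetric -/
  symm : ∀ u v, W u v = W v u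
  /-- no self-loops -/
  diag : ∀ u, W u u = 0

namespace BM

variable {n m : ℕ}

/-- The energy of a configuration of a Boltzmann machine. -/
noncomputable def energy (B : BM n m) (y : (Fin n ⊕ Fin m) → Bool) : ℝ :=
  -(∑ v, B.a v * bv (y v)) - (1 / 2) * ∑ u, ∑ v, B.W u v * bv (y u) * bv (y v)

/-- The output of a Boltzmann machine. -/
noncomputable def output (B : BM n m) (x : Fin n → Bool) : ℝ :=
  ∑ h : Fin m → Bool, Real.exp (-(B.energy (Sum.elim x h)))

/-- The probability distribution of a Boltzmann machine on visible configurations. -/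
noncomputable def dist (B : BM n m) (x : Fin n → Bool) : ℝ :=
  B.output x / ∑ y, B.output y

open Classical in
/-- The number of connections (degree) of a node. -/
noncomputable def deg (B : BM n m) (v : Fin n ⊕ Fin m) : ℕ :=
  (Finset.univ.filter (fun u => B.W v u ≠ 0)).card

end BM

end StoqPaper

namespace StoqPaper

/-- The bound `η^(−1/2) L^(5/2) J^(3/2) Δ^(−3/2) ε^(−1/2) (log(η⁻¹ε⁻¹))^(3/2)` appearing in the
theorems about general stoquastic Hamiltonians. -/
noncomputable def stoqBound (η L J Δ ε : ℝ) : ℝ :=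
  η ^ (-(1 : ℝ) / 2) * L ^ ((5 : ℝ) / 2) * J ^ ((3 : ℝ) / 2) * Δ ^ (-(3 : ℝ) / 2) *
    ε ^ (-(1 : ℝ) / 2) * Real.log (η⁻¹ * ε⁻¹) ^ ((3 : ℝ) / 2)

/-- The bound `L³ J Δ⁻¹ log(η⁻¹ε⁻¹)` appearing in the theorems about stoquastic
frustration-free Hamiltonians. -/
noncomputable def sffBound (L J Δ η ε : ℝ) : ℝ :=
  L ^ (3 : ℕ) * J * Δ⁻¹ * Real.log (η⁻¹ * ε⁻¹)

/-- The marginal of a distribution on `n + m` bits onto the first `n` bits. -/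
noncomputable def marginalFst {n m : ℕ} (p : ((Fin n ⊕ Fin m) → Bool) → ℝ)
    (x : Fin n → Bool) : ℝ :=
  ∑ h : Fin m → Bool, p (Sum.elim x h)

end StoqPaper

namespace StoqSol

open StoqPaper

variable {n : ℕ}

/-- Flip bit `j`. -/
def flip (j : Fin n) (x : Fin n → Bool) : Fin n → Bool := Function.update x j (!(x j))

lemma flip_apply_self (j : Fin n) (x : Fin n → Bool) : flip j x j = !(x j) := by
  simp [flip]

lemma flip_apply_ne (j : Fin n) (x : Fin n → Bool) {i : Fin n} (h : i ≠ j) :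
    flip j x i = x i := Function.update_of_ne h _ _

lemma flip_flip (j : Fin n) (x : Fin n → Bool) : flip j (flip j x) = x := by
  funext i
  by_cases h : i = j
  · subst h; simp [flip]
  · rw [flip_apply_ne _ _ h, flip_apply_ne _ _ h]

lemma flip_involutive (j : Fin n) : Function.Involutive (flip j) := flip_flip j

lemma flip_ne (j : Fin n) (x : Fin n → Bool) : flip j x ≠ x := by
  intro h
  have := congrFun h j
  rw [flip_apply_self] at this
  exact Bool.not_ne_self _ this

/-- The diagonal weight. -/
noncomputable def gv (Hc : (Fin n → Bool) → ℝ) (j : Fin n) (x : Fin n → Bool) : ℝ :=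
  Real.exp ((Hc x - Hc (flip j x)) / 2)

lemma gv_pos (Hc : (Fin n → Bool) → ℝ) (j : Fin n) (x : Fin n → Bool) :
    0 < gv Hc j x := Real.exp_pos _

lemma gv_flip (Hc : (Fin n → Bool) → ℝ) (j : Fin n) (x : Fin n → Bool) :
    gv Hc j (flip j x) = (gv Hc j x)⁻¹ := by
  rw [gv, gv, flip_flip, ← Real.exp_neg]
  ring_nf

lemma gv_mul_e (Hc : (Fin n → Bool) → ℝ) (j : Fin n) (x : Fin n → Bool) :
    gv Hc j x * Real.exp (-(Hc x) / 2) = Real.exp (-(Hc (flip j x)) / 2) := by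
  rw [gv, ← Real.exp_add]
  ring_nf

/-- The stoquastic frustration-free term. -/
noncomputable def Mj (Hc : (Fin n → Bool) → ℝ) (j : Fin n) :
    Matrix (Fin n → Bool) (Fin n → Bool) ℂ :=
  Matrix.diagonal (fun x => ((gv Hc j x : ℝ) : ℂ))
    - Matrix.of (fun x y => if y = flip j x then (1 : ℂ) else 0)

lemma Mj_apply (Hc : (Fin n → Bool) → ℝ) (j : Fin n) (x y : Fin n → Bool) :
    Mj Hc j x y =
      if x = y then ((gv Hc j x : ℝ) : ℂ) else if y = flip j x then -1 else 0 := by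
  rcases eq_or_ne x y with h | h
  · subst h
    simp [Mj, Matrix.sub_apply, (flip_ne j x).symm]
  · simp only [Mj, Matrix.sub_apply, Matrix.diagonal_apply_ne _ h, Matrix.of_apply,
      if_neg h]
    split <;> simp

lemma Mj_mulVec (Hc : (Fin n → Bool) → ℝ) (j : Fin n) (v : (Fin n → Bool) → ℂ)
    (x : Fin n → Bool) :
    (Mj Hc j).mulVec v x = ((gv Hc j x : ℝ) : ℂ) * v x - v (flip j x) := by
  rw [Mj, Matrix.sub_mulVec, Pi.sub_apply, Matrix.mulVec_diagonal]
  congr 1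
  have h1 : ∀ y, (if y = flip j x then (1 : ℂ) else 0) * v y
      = if y = flip j x then v y else 0 := by
    intro y; split <;> simp
  simp only [Matrix.mulVec, dotProduct, Matrix.of_apply, h1,
    Finset.sum_ite_eq' Finset.univ (flip j x) v, Finset.mem_univ, if_true]

/-- The local positive-semidefinite quadratic form. -/
noncomputable def Qf (Hc : (Fin n → Bool) → ℝ) (j : Fin n) (v : (Fin n → Bool) → ℂ) : ℝ :=
  ∑ x, Complex.normSq (((Real.sqrt (gv Hc j x) : ℝ) : ℂ) * v x
    - (((Real.sqrt (gv Hc j x))⁻¹ : ℝ) : ℂ) * v (flip j x))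

lemma Qf_nonneg (Hc : (Fin n → Bool) → ℝ) (j : Fin n) (v : (Fin n → Bool) → ℂ) :
    0 ≤ Qf Hc j v :=
  Finset.sum_nonneg fun _ _ => Complex.normSq_nonneg _

lemma re_qInner_Mj (Hc : (Fin n → Bool) → ℝ) (j : Fin n) (v : (Fin n → Bool) → ℂ) :
    (qInner v ((Mj Hc j).mulVec v)).re = (1 / 2) * Qf Hc j v := by
  have hA : (qInner v ((Mj Hc j).mulVec v)).re
      = ∑ x, (gv Hc j x * Complex.normSq (v x)
        - (v x * (starRingEnd ℂ) (v (flip j x))).re) := by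
    rw [qInner, Complex.re_sum]
    refine Finset.sum_congr rfl fun x _ => ?_
    rw [Mj_mulVec]
    simp [Complex.mul_re, Complex.sub_re, Complex.sub_im, Complex.mul_im,
      Complex.normSq_apply, Complex.conj_re, Complex.conj_im]
    ring
  have hB : Qf Hc j v
      = ∑ x, (gv Hc j x * Complex.normSq (v x)
          + (gv Hc j x)⁻¹ * Complex.normSq (v (flip j x))
          - 2 * (v x * (starRingEnd ℂ) (v (flip j x))).re) := by
    rw [Qf]
    refine Finset.sum_congr rfl fun x _ => ?_
    have hg : 0 ≤ gv Hc j x := (gv_pos Hc j x).le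
    have hs : Real.sqrt (gv Hc j x) * Real.sqrt (gv Hc j x) = gv Hc j x :=
      Real.mul_self_sqrt hg
    have hs' : (Real.sqrt (gv Hc j x))⁻¹ * (Real.sqrt (gv Hc j x))⁻¹
        = (gv Hc j x)⁻¹ := by rw [← mul_inv, hs]
    have hss : Real.sqrt (gv Hc j x) * (Real.sqrt (gv Hc j x))⁻¹ = 1 :=
      mul_inv_cancel₀ (Real.sqrt_pos.mpr (gv_pos Hc j x)).ne'
    simp only [Complex.normSq_apply, Complex.sub_re, Complex.sub_im, Complex.mul_re,
      Complex.mul_im, Complex.conj_re, Complex.conj_im, Complex.ofReal_re, Complex.ofReal_im]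
    linear_combination ((v x).re ^ 2 + (v x).im ^ 2) * hs
      + ((v (flip j x)).re ^ 2 + (v (flip j x)).im ^ 2) * hs'
      + (-2 * ((v x).re * (v (flip j x)).re + (v x).im * (v (flip j x)).im)) * hss
  have hC : ∑ x, (gv Hc j x)⁻¹ * Complex.normSq (v (flip j x))
      = ∑ x, gv Hc j x * Complex.normSq (v x) := by
    have := Fintype.sum_bijective (flip j) (flip_involutive j).bijective
      (fun x => (gv Hc j x)⁻¹ * Complex.normSq (v (flip j x)))
      (fun y => gv Hc j y * Complex.normSq (v y))
      (fun x => by rw [gv_flip])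
    exact this
  rw [hA, hB, Finset.sum_sub_distrib, Finset.sum_sub_distrib,
    Finset.sum_add_distrib, hC, ← Finset.mul_sum]
  ring

lemma qInner_self_eq (v : (Fin n → Bool) → ℂ) :
    qInner v v = ((∑ x, Complex.normSq (v x) : ℝ) : ℂ) := by
  rw [qInner]
  push_cast
  refine Finset.sum_congr rfl fun x _ => ?_
  rw [mul_comm, Complex.mul_conj]

lemma qInner_smul (μ : ℂ) (v : (Fin n → Bool) → ℂ) :
    qInner v (μ • v) = μ * qInner v v := by
  rw [qInner, qInner, Finset.mul_sum]
  refine Finset.sum_congr rfl fun x _ => ?_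
  simp [Pi.smul_apply, smul_eq_mul]
  ring

lemma normSq_sum_pos {v : (Fin n → Bool) → ℂ} (hv : v ≠ 0) :
    0 < ∑ x, Complex.normSq (v x) := by
  obtain ⟨x₀, hx₀⟩ := Function.ne_iff.mp hv
  exact Finset.sum_pos' (fun _ _ => Complex.normSq_nonneg _)
    ⟨x₀, Finset.mem_univ _, Complex.normSq_pos.mpr hx₀⟩

lemma eig_nonneg_of_quad (H : Matrix (Fin n → Bool) (Fin n → Bool) ℂ)
    (hq : ∀ v, 0 ≤ (qInner v (H.mulVec v)).re) :
    ∀ μ : ℝ, IsEig H μ → 0 ≤ μ := by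
  rintro μ ⟨v, hv, hev⟩
  have hN := normSq_sum_pos hv
  have h1 : (qInner v (H.mulVec v)).re = μ * ∑ x, Complex.normSq (v x) := by
    rw [hev, qInner_smul, qInner_self_eq]
    simp
  nlinarith [hq v, h1]

lemma kernel_relation (Hc : (Fin n → Bool) → ℝ) (j : Fin n) (v : (Fin n → Bool) → ℂ)
    (hQ : Qf Hc j v = 0) :
    ∀ x, v (flip j x) = ((gv Hc j x : ℝ) : ℂ) * v x := by
  intro x
  have h0 : ∀ y ∈ Finset.univ, (0:ℝ) ≤ Complex.normSq (((Real.sqrt (gv Hc j y) : ℝ) : ℂ) * v y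
      - (((Real.sqrt (gv Hc j y))⁻¹ : ℝ) : ℂ) * v (flip j y)) :=
    fun y _ => Complex.normSq_nonneg _
  have h1 := (Finset.sum_eq_zero_iff_of_nonneg h0).mp hQ x (Finset.mem_univ x)
  have h2 : ((Real.sqrt (gv Hc j x) : ℝ) : ℂ) * v x
      = (((Real.sqrt (gv Hc j x))⁻¹ : ℝ) : ℂ) * v (flip j x) := by
    have := Complex.normSq_eq_zero.mp h1
    linear_combination this
  have hs0 : Real.sqrt (gv Hc j x) ≠ 0 := (Real.sqrt_pos.mpr (gv_pos Hc j x)).ne'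
  have hsC : ((Real.sqrt (gv Hc j x) : ℝ) : ℂ) ≠ 0 := Complex.ofReal_ne_zero.mpr hs0
  rw [Complex.ofReal_inv] at h2
  have h4 := congrArg (fun z => ((Real.sqrt (gv Hc j x) : ℝ) : ℂ) * z) h2
  simp only [← mul_assoc, mul_inv_cancel₀ hsC, one_mul] at h4
  rw [← Real.mul_self_sqrt (gv_pos Hc j x).le, Complex.ofReal_mul]
  exact h4.symm

lemma constant_of_flip (w : (Fin n → Bool) → ℂ)
    (hw : ∀ (j : Fin n) (x : Fin n → Bool), w (flip j x) = w x) :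
    ∀ x y, w x = w y := by
  have key : ∀ s : Finset (Fin n), ∀ x y : Fin n → Bool,
      (∀ i, i ∉ s → x i = y i) → w x = w y := by
    intro s
    induction s using Finset.induction_on with
    | empty =>
      intro x y h
      have : x = y := funext fun i => h i (Finset.notMem_empty i)
      rw [this]
    | @insert a s ha ih =>
      intro x y h
      by_cases hxy : x a = y a
      · exact ih x y fun i hi => by
          by_cases hia : i = a
          · subst hia; exact hxy
          · exact h i (by simp [Finset.mem_insert, hia, hi])
      · have hflipa : flip a x = Function.update x a (y a) := by
          funext i
          by_cases hia : i = a
          · subst hia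
            rw [flip_apply_self, Function.update_self]
            cases hx : x i <;> cases hy : y i <;> simp_all
          · rw [flip_apply_ne _ _ hia, Function.update_of_ne hia]
        have h2 : w (Function.update x a (y a)) = w y := by
          refine ih _ y fun i hi => ?_
          by_cases hia : i = a
          · subst hia; rw [Function.update_self]
          · rw [Function.update_of_ne hia]
            exact h i (by simp [Finset.mem_insert, hia, hi])
        rw [← hflipa, hw a x] at h2
        exact h2
  intro x y
  exact key Finset.univ x y fun i hi => absurd (Finset.mem_univ i) hi

lemma herm_Mj (Hc : (Fin n → Bool) → ℝ) (j : Fin n) : (Mj Hc j).IsHermitian := by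
  rw [Matrix.IsHermitian]
  ext x y
  rw [Matrix.conjTranspose_apply, Mj_apply, Mj_apply]
  by_cases h : x = y
  · subst h
    simp
  · rw [if_neg (Ne.symm h), if_neg h]
    by_cases h2 : y = flip j x
    · have h3 : x = flip j y := by rw [h2, flip_flip]
      rw [if_pos h3, if_pos h2]
      simp
    · have h3 : x ≠ flip j y := fun hc => h2 (by rw [hc, flip_flip])
      rw [if_neg h3, if_neg h2]
      simp

lemma stoq_Mj (Hc : (Fin n → Bool) → ℝ) (j : Fin n) : StoqEntries (Mj Hc j) := by
  intro x y
  rw [Mj_apply]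
  constructor
  · split
    · simp
    · split <;> simp
  · intro hxy
    rw [if_neg hxy]
    split <;> norm_num

lemma klocal_Mj {k k' T : ℕ} (S : Fin T → Finset (Fin n))
    (hterm : Fin T → ((Fin n) → Bool) → ℝ)
    (hcard : ∀ b, (S b).card ≤ k)
    (hdep : ∀ b, DependsOnlyOn (S b) (hterm b))
    (hbit : ∀ i : Fin n, (Finset.univ.filter (fun b => i ∈ S b)).card ≤ k')
    (j : Fin n) :
    KLocal (k' * (k - 1) + 1) (Mj (fun y => ∑ b, hterm b y) j) := by
  classical
  set Hc : (Fin n → Bool) → ℝ := fun y => ∑ b, hterm b y with hHc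
  set Sj : Finset (Fin n) :=
    insert j ((Finset.univ.filter (fun b => j ∈ S b)).biUnion (fun b => (S b).erase j))
    with hSj
  have hjS : j ∈ Sj := Finset.mem_insert_self _ _
  refine ⟨Sj, ?_, ?_, ?_⟩
  · -- cardinality bound
    have h1 : Sj.card ≤
        ((Finset.univ.filter (fun b => j ∈ S b)).biUnion (fun b => (S b).erase j)).card + 1 :=
      Finset.card_insert_le _ _
    have h2 : ((Finset.univ.filter (fun b => j ∈ S b)).biUnion (fun b => (S b).erase j)).card
        ≤ ∑ b ∈ Finset.univ.filter (fun b => j ∈ S b), ((S b).erase j).card :=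
      Finset.card_biUnion_le
    have h3 : ∑ b ∈ Finset.univ.filter (fun b => j ∈ S b), ((S b).erase j).card
        ≤ (Finset.univ.filter (fun b => j ∈ S b)).card * (k - 1) := by
      rw [← smul_eq_mul]
      refine Finset.sum_le_card_nsmul _ _ _ fun b hb => ?_
      rw [Finset.card_erase_of_mem (Finset.mem_filter.mp hb).2]
      exact Nat.sub_le_sub_right (hcard b) 1
    have h4 : (Finset.univ.filter (fun b => j ∈ S b)).card * (k - 1) ≤ k' * (k - 1) :=
      Nat.mul_le_mul_right _ (hbit j)
    omega
  · -- entries vanish off Sj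
    rintro x y ⟨i, hiS, hixy⟩
    have hij : i ≠ j := fun hc => hiS (hc ▸ hjS)
    rw [Mj_apply]
    rw [if_neg (fun hc : x = y => hixy (by rw [hc])), if_neg]
    intro hc
    exact hixy (by rw [hc, flip_apply_ne _ _ hij])
  · -- entries depend only on restriction to Sj
    have hflipiff : ∀ (x y x' y' : Fin n → Bool), (∀ i ∈ Sj, x i = x' i) →
        (∀ i ∈ Sj, y i = y' i) → (∀ i, i ∉ Sj → x' i = y' i) →
        y = flip j x → y' = flip j x' := by
      intro x y x' y' hx hy hout' hyx
      funext i
      by_cases hij : i = j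
      · subst hij
        rw [flip_apply_self, ← hx i hjS, ← hy i hjS, hyx, flip_apply_self]
      · rw [flip_apply_ne _ _ hij]
        by_cases hiS : i ∈ Sj
        · rw [← hy i hiS, ← hx i hiS, hyx, flip_apply_ne _ _ hij]
        · exact (hout' i hiS).symm
    have heqiff : ∀ (x y x' y' : Fin n → Bool), (∀ i ∈ Sj, x i = x' i) →
        (∀ i ∈ Sj, y i = y' i) → (∀ i, i ∉ Sj → x' i = y' i) →
        x = y → x' = y' := by
      intro x y x' y' hx hy hout' hxy
      funext i
      by_cases hiS : i ∈ Sj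
      · rw [← hx i hiS, ← hy i hiS, hxy]
      · exact hout' i hiS
    have hgv : ∀ x x' : Fin n → Bool, (∀ i ∈ Sj, x i = x' i) →
        gv Hc j x = gv Hc j x' := by
      intro x x' hx
      have hterm_eq : ∀ b : Fin T,
          hterm b x - hterm b (flip j x) = hterm b x' - hterm b (flip j x') := by
        intro b
        by_cases hjb : j ∈ S b
        · have hsub : S b ⊆ Sj := by
            intro i hi
            by_cases hij : i = j
            · subst hij; exact hjS
            · exact Finset.mem_insert_of_mem (Finset.mem_biUnion.mpr
                ⟨b, Finset.mem_filter.mpr ⟨Finset.mem_univ _, hjb⟩,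
                  Finset.mem_erase.mpr ⟨hij, hi⟩⟩)
          have e1 : hterm b x = hterm b x' := hdep b x x' fun i hi => hx i (hsub hi)
          have e2 : hterm b (flip j x) = hterm b (flip j x') := by
            refine hdep b _ _ fun i hi => ?_
            by_cases hij : i = j
            · subst hij
              rw [flip_apply_self, flip_apply_self, hx i hjS]
            · rw [flip_apply_ne _ _ hij, flip_apply_ne _ _ hij]
              exact hx i (hsub hi)
          rw [e1, e2]
        · have e1 : hterm b (flip j x) = hterm b x :=
            hdep b _ _ fun i hi => flip_apply_ne _ _ fun hc => hjb (hc ▸ hi)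
          have e2 : hterm b (flip j x') = hterm b x' :=
            hdep b _ _ fun i hi => flip_apply_ne _ _ fun hc => hjb (hc ▸ hi)
          rw [e1, e2, sub_self, sub_self]
      have hdiff : Hc x - Hc (flip j x) = Hc x' - Hc (flip j x') := by
        simp only [hHc]
        rw [← Finset.sum_sub_distrib, ← Finset.sum_sub_distrib]
        exact Finset.sum_congr rfl fun b _ => hterm_eq b
      rw [gv, gv, hdiff]
    intro x y x' y' hx hy hout hout'
    have hxsym : ∀ i ∈ Sj, x' i = x i := fun i hi => (hx i hi).symm
    have hysym : ∀ i ∈ Sj, y' i = y i := fun i hi => (hy i hi).symm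
    rw [Mj_apply, Mj_apply]
    by_cases h1 : x = y
    · rw [if_pos h1, if_pos (heqiff x y x' y' hx hy hout' h1), hgv x x' hx]
    · have h1' : x' ≠ y' := fun hc => h1 (heqiff x' y' x y hxsym hysym hout hc)
      rw [if_neg h1, if_neg h1']
      by_cases h2 : y = flip j x
      · rw [if_pos h2, if_pos (hflipiff x y x' y' hx hy hout' h2)]
      · have h2' : y' ≠ flip j x' := fun hc =>
          h2 (hflipiff x' y' x y hxsym hysym hout hc)
        rw [if_neg h2, if_neg h2']

lemma qInner_sum_comm {m : ℕ} (v : (Fin n → Bool) → ℂ)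
    (w : Fin m → ((Fin n → Bool) → ℂ)) :
    qInner v (∑ j, w j) = ∑ j, qInner v (w j) := by
  rw [qInner]
  simp only [Finset.sum_apply, Finset.mul_sum]
  rw [Finset.sum_comm]
  rfl

lemma re_qInner_sum (Hc : (Fin n → Bool) → ℝ) (v : (Fin n → Bool) → ℂ) :
    (qInner v ((∑ j, Mj Hc j).mulVec v)).re = ∑ j, (1 / 2) * Qf Hc j v := by
  have h1 : (∑ j, Mj Hc j).mulVec v = ∑ j, (Mj Hc j).mulVec v := by
    funext x
    simp only [Matrix.mulVec, dotProduct, Matrix.sum_apply, Finset.sum_apply,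
      Finset.sum_mul]
    rw [Finset.sum_comm]
  rw [h1, qInner_sum_comm, Complex.re_sum]
  exact Finset.sum_congr rfl fun j _ => re_qInner_Mj Hc j v

end StoqSol

open StoqPaper
theorem statement_2 (n k k' T : ℕ) (S : Fin T → Finset (Fin n))
    (hterm : Fin T → ((Fin n) → Bool) → ℝ)
    (hcard : ∀ b, (S b).card ≤ k)
    (hdep : ∀ b, DependsOnlyOn (S b) (hterm b))
    (hbit : ∀ i : Fin n, (Finset.univ.filter (fun b => i ∈ S b)).card ≤ k')
    (Hc : ((Fin n) → Bool) → ℝ) (hHc : Hc = fun y => ∑ b, hterm b y)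
    (ψ : ((Fin n) → Bool) → ℂ)
    (hψ : ψ = fun x =>
      ((Real.exp (-(Hc x) / 2) / Real.sqrt (∑ y, Real.exp (-(Hc y))) : ℝ) : ℂ))
    (Γ X : Fin n → Matrix ((Fin n) → Bool) ((Fin n) → Bool) ℂ)
    (hΓ : Γ = fun j => Matrix.diagonal (fun x =>
      ((Real.exp ((Hc x - Hc (Function.update x j (!(x j)))) / 2) : ℝ) : ℂ)))
    (hX : X = fun j => Matrix.of (fun x y =>
      if y = Function.update x j (!(x j)) then (1 : ℂ) else 0)) :
    (∀ j, (Γ j - X j).IsHermitian) ∧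
    (∀ j, KLocal (k' * (k - 1) + 1) (Γ j - X j)) ∧
    (∀ j, StoqEntries (Γ j - X j)) ∧
    (∀ j, IsGroundEnergy (Γ j - X j) 0) ∧
    (∀ j, (Γ j - X j).mulVec ψ = 0) ∧
    IsGroundEnergy (∑ j, (Γ j - X j)) 0 ∧
    (∑ j, (Γ j - X j)).mulVec ψ = 0 ∧
    (∀ v, (∑ j, (Γ j - X j)).mulVec v = 0 → ∃ c : ℂ, v = c • ψ) := by
  classical
  subst hΓ hX
  have hM : ∀ j : Fin n, (Matrix.diagonal (fun x =>
        ((Real.exp ((Hc x - Hc (Function.update x j (!(x j)))) / 2) : ℝ) : ℂ))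
      - Matrix.of (fun x y => if y = Function.update x j (!(x j)) then (1 : ℂ) else 0))
      = StoqSol.Mj Hc j := fun j => rfl
  simp only [hM]
  -- basic facts about the coherent Gibbs state
  have hZ : 0 < ∑ y : Fin n → Bool, Real.exp (-(Hc y)) :=
    Finset.sum_pos (fun _ _ => Real.exp_pos _) Finset.univ_nonempty
  set ψr : (Fin n → Bool) → ℝ := fun x =>
    Real.exp (-(Hc x) / 2) / Real.sqrt (∑ y, Real.exp (-(Hc y))) with hψr
  have hψ0 : ∀ x, ψ x = ((ψr x : ℝ) : ℂ) := fun x => by rw [hψ]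
  have hψr_pos : ∀ x, 0 < ψr x := fun x =>
    div_pos (Real.exp_pos _) (Real.sqrt_pos.mpr hZ)
  have hψx_ne : ∀ x, ψ x ≠ 0 := fun x => by
    rw [hψ0]; exact Complex.ofReal_ne_zero.mpr (hψr_pos x).ne'
  have hψne : ψ ≠ 0 := fun h => hψx_ne (fun _ => false) (congrFun h _)
  have hψr_flip : ∀ (j : Fin n) (x), ψr (StoqSol.flip j x) = StoqSol.gv Hc j x * ψr x := by
    intro j x
    rw [hψr]
    dsimp only
    rw [← mul_div_assoc, StoqSol.gv_mul_e]
  have hψ_flip : ∀ (j : Fin n) (x), ψ (StoqSol.flip j x)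
      = ((StoqSol.gv Hc j x : ℝ) : ℂ) * ψ x := by
    intro j x
    rw [hψ0, hψ0, ← Complex.ofReal_mul, hψr_flip]
  have hMψ : ∀ j : Fin n, (StoqSol.Mj Hc j).mulVec ψ = 0 := by
    intro j
    funext x
    rw [StoqSol.Mj_mulVec, Pi.zero_apply, sub_eq_zero, ← hψ_flip]
  have hqnonneg : ∀ (j : Fin n) v, 0 ≤ (qInner v ((StoqSol.Mj Hc j).mulVec v)).re := by
    intro j v
    rw [StoqSol.re_qInner_Mj]
    have := StoqSol.Qf_nonneg Hc j v
    linarith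
  refine ⟨?_, ?_, ?_, ?_, hMψ, ?_, ?_, ?_⟩
  · exact fun j => StoqSol.herm_Mj Hc j
  · intro j
    rw [hHc]
    exact StoqSol.klocal_Mj S hterm hcard hdep hbit j
  · exact fun j => StoqSol.stoq_Mj Hc j
  · intro j
    refine ⟨⟨ψ, hψne, by rw [hMψ j]; simp⟩, fun μ hμ => ?_⟩
    exact StoqSol.eig_nonneg_of_quad _ (hqnonneg j) μ hμ
  · -- ground energy of the sum
    have hsumψ : (∑ j : Fin n, StoqSol.Mj Hc j).mulVec ψ = 0 := by
      funext x
      simp only [Matrix.mulVec, dotProduct, Matrix.sum_apply, Finset.sum_mul]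
      rw [Finset.sum_comm]
      have : ∀ j : Fin n, ∑ y, StoqSol.Mj Hc j x y * ψ y = 0 := fun j => by
        have := congrFun (hMψ j) x
        simpa [Matrix.mulVec, dotProduct] using this
      simp [this]
    refine ⟨⟨ψ, hψne, by rw [hsumψ]; simp⟩, fun μ hμ => ?_⟩
    refine StoqSol.eig_nonneg_of_quad _ (fun v => ?_) μ hμ
    rw [StoqSol.re_qInner_sum]
    refine Finset.sum_nonneg fun j _ => ?_
    have := StoqSol.Qf_nonneg Hc j v
    linarith
  · funext x
    simp only [Matrix.mulVec, dotProduct, Matrix.sum_apply, Finset.sum_mul]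
    rw [Finset.sum_comm]
    have : ∀ j : Fin n, ∑ y, StoqSol.Mj Hc j x y * ψ y = 0 := fun j => by
      have := congrFun (hMψ j) x
      simpa [Matrix.mulVec, dotProduct] using this
    simp [this]
  · -- uniqueness of the ground state
    intro v hv
    have h0 : (qInner v ((∑ j : Fin n, StoqSol.Mj Hc j).mulVec v)).re = 0 := by
      rw [hv]
      simp [qInner]
    rw [StoqSol.re_qInner_sum] at h0
    have hQ0 : ∀ j : Fin n, StoqSol.Qf Hc j v = 0 := by
      intro j
      have hmem := (Finset.sum_eq_zero_iff_of_nonneg (fun j _ => by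
        have := StoqSol.Qf_nonneg Hc j v
        linarith)).mp h0 j (Finset.mem_univ j)
      linarith
    have hrel : ∀ (j : Fin n) x, v (StoqSol.flip j x)
        = ((StoqSol.gv Hc j x : ℝ) : ℂ) * v x :=
      fun j => StoqSol.kernel_relation Hc j v (hQ0 j)
    have hw : ∀ (j : Fin n) (x), v (StoqSol.flip j x) / ψ (StoqSol.flip j x) = v x / ψ x := by
      intro j x
      rw [hrel j x, hψ_flip j x]
      exact mul_div_mul_left _ _ (Complex.ofReal_ne_zero.mpr (StoqSol.gv_pos Hc j x).ne')
    have hconst := StoqSol.constant_of_flip (fun x => v x / ψ x) hw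
    refine ⟨v (fun _ => false) / ψ (fun _ => false), funext fun x => ?_⟩
    have h := hconst x (fun _ => false)
    rw [div_eq_iff (hψx_ne x)] at h
    rw [h, Pi.smul_apply, smul_eq_mul]
end

section
/- Let B be a Boltzmann machine with n visible nodes and m hidden nodes in which every node has at most k' connections. Then there exists a (k'+1)-local stoquastic frustration-free Hamiltonian H on n+m qubits, a sum of n+m terms (one per qubit), whose ground state |φ⟩ is unique and such that the distribution of B equals the marginal onto the first n bits of the distribution y ↦ |⟨y|φ⟩|², i.e. f(x)/∑_{x'} f(x') = ∑_{h∈{0,1}^m} |⟨(x,h)|φ⟩|² for all x ∈ {0,1}^n, where f is the output of B. -/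
open scoped BigOperators

set_option linter.unusedSectionVars false
set_option maxHeartbeats 1000000

namespace StoqPaper

variable {ι : Type*} [Fintype ι] [DecidableEq ι]

/-- flip bit q -/
def gflip (q : ι) (y : ι → Bool) : ι → Bool := Function.update y q (!(y q))

lemma gflip_apply_self (q : ι) (y : ι → Bool) : gflip q y q = !(y q) := by
  simp [gflip]

lemma gflip_apply_ne (q i : ι) (y : ι → Bool) (h : i ≠ q) : gflip q y i = y i := by
  simp [gflip, Function.update_of_ne h]

lemma gflip_gflip (q : ι) (y : ι → Bool) : gflip q (gflip q y) = y := by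
  funext i
  by_cases h : i = q
  · subst h; simp [gflip]
  · simp [gflip, Function.update_of_ne h]

lemma gflip_ne (q : ι) (y : ι → Bool) : gflip q y ≠ y := by
  intro h
  have := congrFun h q
  simp [gflip] at this

lemma gflip_involutive (q : ι) : Function.Involutive (gflip (ι := ι) q) :=
  fun y => gflip_gflip q y

variable (En : (ι → Bool) → ℝ)

/-- the ratio r_q(y) = sqrt(p(flip y)/p(y)) for p = exp(-En). -/
noncomputable def gsr (q : ι) (y : ι → Bool) : ℝ :=
  Real.exp ((En y - En (gflip q y)) / 2)

lemma gsr_pos (q : ι) (y : ι → Bool) : 0 < gsr En q y := Real.exp_pos _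

lemma gsr_mul_flip (q : ι) (y : ι → Bool) : gsr En q y * gsr En q (gflip q y) = 1 := by
  rw [gsr, gsr, gflip_gflip, ← Real.exp_add]
  ring_nf
  exact Real.exp_zero

lemma gsr_flip (q : ι) (y : ι → Bool) : gsr En q (gflip q y) = (gsr En q y)⁻¹ := by
  exact eq_inv_of_mul_eq_one_left (by rw [mul_comm]; exact gsr_mul_flip En q y)

/-- the unnormalized ground state amplitude -/
noncomputable def gsφ0 (y : ι → Bool) : ℝ := Real.exp (-(En y) / 2)

lemma gsφ0_pos (y : ι → Bool) : 0 < gsφ0 En y := Real.exp_pos _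

lemma gsr_mul_gsφ0 (q : ι) (y : ι → Bool) :
    gsr En q y * gsφ0 En y = gsφ0 En (gflip q y) := by
  rw [gsr, gsφ0, gsφ0, ← Real.exp_add]
  ring_nf

/-- the local Hamiltonian term at qubit q -/
noncomputable def gsH (q : ι) : Matrix (ι → Bool) (ι → Bool) ℂ :=
  Matrix.of fun y y' => if y' = y then ((gsr En q y : ℝ) : ℂ)
    else if y' = gflip q y then -1 else 0

lemma gsH_mulVec (q : ι) (v : (ι → Bool) → ℂ) :
    (gsH En q).mulVec v = fun y => (gsr En q y : ℂ) * v y - v (gflip q y) := by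
  funext y
  have hsplit : ∀ y' : ι → Bool, gsH En q y y' * v y'
      = (if y' = y then (gsr En q y : ℂ) * v y' else 0)
        + (if y' = gflip q y then (-1) * v y' else 0) := by
    intro y'
    by_cases h1 : y' = y
    · subst h1
      simp [gsH, (gflip_ne q y').symm]
    · by_cases h2 : y' = gflip q y
      · subst h2
        simp [gsH, h1]
      · simp [gsH, h1, h2]
  rw [Matrix.mulVec, show (dotProduct (gsH En q y) v) = ∑ y', gsH En q y y' * v y' from rfl]
  rw [Finset.sum_congr rfl (fun y' _ => hsplit y'), Finset.sum_add_distrib]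
  simp [Finset.sum_ite_eq', sub_eq_add_neg]


lemma gsH_hermitian (q : ι) : (gsH En q).IsHermitian := by
  ext y' y
  simp only [Matrix.conjTranspose_apply, gsH, Matrix.of_apply]
  by_cases h1 : y' = y
  · subst h1
    simp
  · have h1' : ¬ y = y' := fun h => h1 h.symm
    by_cases h2 : y = gflip q y'
    · have h2' : y' = gflip q y := by rw [h2, gflip_gflip]
      rw [if_neg h1', if_neg h1, if_pos h2, if_pos h2']
      simp
    · have h2' : ¬ y' = gflip q y := by
        intro h; exact h2 (by rw [h, gflip_gflip])
      simp [h1, h1', h2, h2']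

lemma gsH_stoq (q : ι) : StoqEntries (gsH En q) := by
  intro x y
  constructor
  · simp only [gsH, Matrix.of_apply]
    split
    · simp
    · split <;> simp
  · intro hxy
    have hyx : ¬ y = x := fun h => hxy h.symm
    simp only [gsH, Matrix.of_apply, if_neg hyx]
    split <;> simp

/-- the quadratic form term -/
noncomputable def gsT (q : ι) (v : (ι → Bool) → ℂ) (y : ι → Bool) : ℝ :=
  gsr En q y * Complex.normSq (v y) - ((starRingEnd ℂ) (v y) * v (gflip q y)).re

lemma gs_qform (q : ι) (v : (ι → Bool) → ℂ) :
    (qInner v ((gsH En q).mulVec v)).re = ∑ y, gsT En q v y := by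
  rw [gsH_mulVec, qInner]
  rw [Complex.re_sum]
  refine Finset.sum_congr rfl fun y _ => ?_
  simp only [gsT, mul_sub]
  rw [Complex.sub_re]
  congr 1
  have : (starRingEnd ℂ) (v y) * ((gsr En q y : ℂ) * v y)
      = (gsr En q y : ℂ) * ((starRingEnd ℂ) (v y) * v y) := by ring
  rw [this]
  simp [Complex.mul_re, Complex.normSq_apply]

lemma gsT_pair (q : ι) (v : (ι → Bool) → ℂ) (y : ι → Bool) :
    gsT En q v y + gsT En q v (gflip q y)
      = Complex.normSq ((Real.sqrt (gsr En q y) : ℂ) * v y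
          - ((Real.sqrt (gsr En q y) : ℂ))⁻¹ * v (gflip q y)) := by
  set r := gsr En q y with hr
  have hrpos : 0 < r := gsr_pos En q y
  set s := Real.sqrt r with hs
  have hspos : 0 < s := Real.sqrt_pos.mpr hrpos
  have hs2 : s * s = r := Real.mul_self_sqrt hrpos.le
  set a := v y
  set b := v (gflip q y)
  rw [Complex.normSq_sub]
  have h1 : Complex.normSq ((s : ℂ) * a) = r * Complex.normSq a := by
    rw [Complex.normSq_mul, Complex.normSq_ofReal, ← hs2]
  have hsC : ((s : ℂ)) ≠ 0 := by
    simpa using hspos.ne'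
  have h2 : Complex.normSq (((s : ℂ))⁻¹ * b) = r⁻¹ * Complex.normSq b := by
    rw [Complex.normSq_mul, Complex.normSq_inv, Complex.normSq_ofReal, ← hs2]
  have h3 : ((s : ℂ) * a * (starRingEnd ℂ) (((s : ℂ))⁻¹ * b)).re
      = ((starRingEnd ℂ) a * b).re := by
    have : (s : ℂ) * a * (starRingEnd ℂ) (((s : ℂ))⁻¹ * b)
        = (s : ℂ) * ((s : ℂ))⁻¹ * (a * (starRingEnd ℂ) b) := by
      rw [map_mul]
      rw [show (starRingEnd ℂ) ((s:ℂ))⁻¹ = ((s:ℂ))⁻¹ by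
        rw [map_inv₀, Complex.conj_ofReal]]
      ring
    rw [this, mul_inv_cancel₀ hsC, one_mul]
    have : (a * (starRingEnd ℂ) b) = (starRingEnd ℂ) ((starRingEnd ℂ) a * b) := by
      rw [map_mul]; simp
    rw [this, Complex.conj_re]
  rw [h1, h2, h3]
  have hgb : gsT En q v (gflip q y)
      = r⁻¹ * Complex.normSq b - ((starRingEnd ℂ) a * b).re := by
    rw [gsT, gflip_gflip, gsr_flip]
    congr 1
    have : ((starRingEnd ℂ) b * a) = (starRingEnd ℂ) ((starRingEnd ℂ) a * b) := by
      rw [map_mul]; simp; ring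
    rw [this, Complex.conj_re]
  rw [hgb, gsT]
  ring

lemma sum_gflip (q : ι) (f : (ι → Bool) → ℝ) :
    ∑ y, f (gflip q y) = ∑ y, f y :=
  Equiv.sum_comp (gflip_involutive (ι := ι) q).toPerm f

lemma gs_qform_nonneg (q : ι) (v : (ι → Bool) → ℂ) :
    0 ≤ (qInner v ((gsH En q).mulVec v)).re := by
  rw [gs_qform]
  have hsum : ∑ y, gsT En q v y = (1/2) * ∑ y, (gsT En q v y + gsT En q v (gflip q y)) := by
    rw [Finset.sum_add_distrib, sum_gflip q (fun y => gsT En q v y)]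
    ring
  rw [hsum]
  have : 0 ≤ ∑ y, (gsT En q v y + gsT En q v (gflip q y)) := by
    apply Finset.sum_nonneg
    intro y _
    rw [gsT_pair]
    exact Complex.normSq_nonneg _
  linarith

lemma gs_qform_eq_zero (q : ι) (v : (ι → Bool) → ℂ)
    (h : (qInner v ((gsH En q).mulVec v)).re = 0) :
    ∀ y, v (gflip q y) = (gsr En q y : ℂ) * v y := by
  intro y
  rw [gs_qform] at h
  have hsum : ∑ y, gsT En q v y = (1/2) * ∑ y, (gsT En q v y + gsT En q v (gflip q y)) := by
    rw [Finset.sum_add_distrib, sum_gflip q (fun y => gsT En q v y)]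
    ring
  rw [hsum] at h
  have hzero : ∀ z ∈ Finset.univ, (gsT En q v z + gsT En q v (gflip q z)) = 0 := by
    apply (Finset.sum_eq_zero_iff_of_nonneg ?_).mp (by linarith)
    intro z _
    rw [gsT_pair]
    exact Complex.normSq_nonneg _
  have hy := hzero y (Finset.mem_univ y)
  rw [gsT_pair] at hy
  have hw := Complex.normSq_eq_zero.mp hy
  set r := gsr En q y with hr
  have hrpos : 0 < r := gsr_pos En q y
  set s := Real.sqrt r with hs
  have hspos : 0 < s := Real.sqrt_pos.mpr hrpos
  have hs2 : s * s = r := Real.mul_self_sqrt hrpos.le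
  have hsC : ((s : ℂ)) ≠ 0 := by simpa using hspos.ne'
  have heq : ((s:ℂ))⁻¹ * v (gflip q y) = (s:ℂ) * v y := (sub_eq_zero.mp hw).symm
  have h2 : v (gflip q y) = (s:ℂ) * (s:ℂ) * v y := by
    have h3 : (s:ℂ) * (((s:ℂ))⁻¹ * v (gflip q y)) = (s:ℂ) * ((s:ℂ) * v y) := by rw [heq]
    rw [← mul_assoc, mul_inv_cancel₀ hsC, one_mul] at h3
    rw [h3, mul_assoc]
  rw [h2]
  congr 1
  rw [← hs2]
  push_cast
  ring

noncomputable def gsZ : ℝ := Real.sqrt (∑ y, Real.exp (-(En y)))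

lemma gsZ_pos : 0 < gsZ En := by
  apply Real.sqrt_pos.mpr
  apply Finset.sum_pos (fun y _ => Real.exp_pos _)
  exact ⟨fun _ => false, Finset.mem_univ _⟩

lemma gsZ_sq : gsZ En * gsZ En = ∑ y, Real.exp (-(En y)) :=
  Real.mul_self_sqrt (Finset.sum_nonneg fun y _ => (Real.exp_pos _).le)

noncomputable def gsφ (y : ι → Bool) : ℂ := ((gsφ0 En y / gsZ En : ℝ) : ℂ)

lemma gsφ_pos (y : ι → Bool) : 0 < gsφ0 En y / gsZ En :=
  div_pos (gsφ0_pos En y) (gsZ_pos En)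

lemma gsφ_ne_zero (y : ι → Bool) : gsφ En y ≠ 0 := by
  simp only [gsφ, ne_eq, Complex.ofReal_eq_zero]
  exact (gsφ_pos En y).ne'

lemma gsφ_flip (q : ι) (y : ι → Bool) :
    gsφ En (gflip q y) = (gsr En q y : ℂ) * gsφ En y := by
  simp only [gsφ]
  rw [← Complex.ofReal_mul]
  congr 1
  rw [← gsr_mul_gsφ0]
  ring

lemma gsH_mulVec_gsφ (q : ι) : (gsH En q).mulVec (gsφ En) = 0 := by
  rw [gsH_mulVec]
  funext y
  simp only [Pi.zero_apply]
  rw [gsφ_flip En q y]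
  ring

lemma normSq_gsφ (y : ι → Bool) :
    Complex.normSq (gsφ En y) = Real.exp (-(En y)) / (∑ z, Real.exp (-(En z))) := by
  rw [gsφ, Complex.normSq_ofReal, div_mul_div_comm, gsZ_sq]
  congr 1
  rw [gsφ0, ← Real.exp_add]
  ring_nf

lemma sum_normSq_gsφ : ∑ y, Complex.normSq (gsφ En y) = 1 := by
  rw [Finset.sum_congr rfl fun y _ => normSq_gsφ En y, ← Finset.sum_div]
  apply div_self
  exact (Finset.sum_pos (fun y _ => Real.exp_pos _) ⟨fun _ => false, Finset.mem_univ _⟩).ne'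

lemma l2norm_gsφ : l2norm (gsφ En) = 1 := by
  rw [l2norm, sum_normSq_gsφ, Real.sqrt_one]

lemma qInner_self_smul_re (v : (ι → Bool) → ℂ) (μ : ℝ) :
    (qInner v ((μ : ℂ) • v)).re = μ * ∑ x, Complex.normSq (v x) := by
  rw [qInner]
  have : ∀ x : ι → Bool, (starRingEnd ℂ) (v x) * ((μ : ℂ) • v) x
      = (μ : ℂ) * ((Complex.normSq (v x) : ℝ) : ℂ) := by
    intro x
    simp only [Pi.smul_apply, smul_eq_mul]
    rw [Complex.normSq_eq_conj_mul_self]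
    ring
  rw [Finset.sum_congr rfl fun x _ => this x, ← Finset.mul_sum]
  push_cast
  simp

lemma sum_normSq_pos {v : (ι → Bool) → ℂ} (hv : v ≠ 0) :
    0 < ∑ x, Complex.normSq (v x) := by
  obtain ⟨x, hx⟩ : ∃ x, v x ≠ 0 := by
    by_contra h
    push_neg at h
    exact hv (funext h)
  exact Finset.sum_pos' (fun y _ => Complex.normSq_nonneg _)
    ⟨x, Finset.mem_univ x, Complex.normSq_pos.mpr hx⟩

lemma eig_nonneg_of_qform (M : Matrix (ι → Bool) (ι → Bool) ℂ)
    (hM : ∀ v, 0 ≤ (qInner v (M.mulVec v)).re) {μ : ℝ} (h : IsEig M μ) : 0 ≤ μ := by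
  obtain ⟨v, hv0, hv⟩ := h
  have h1 := hM v
  rw [hv, qInner_self_smul_re] at h1
  have h2 := sum_normSq_pos hv0
  nlinarith

lemma gsH_ground (q : ι) : IsGroundEnergy (gsH En q) 0 := by
  constructor
  · exact ⟨gsφ En, fun h => gsφ_ne_zero En (fun _ => false) (congrFun h _),
      by rw [gsH_mulVec_gsφ]; simp⟩
  · intro μ hμ
    exact eig_nonneg_of_qform _ (gs_qform_nonneg En q) hμ

lemma sum_mulVec {κ : Type*} [Fintype κ] (M : κ → Matrix (ι → Bool) (ι → Bool) ℂ)
    (v : (ι → Bool) → ℂ) : (∑ q, M q).mulVec v = ∑ q, (M q).mulVec v := by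
  funext x
  simp only [Matrix.mulVec, dotProduct, Matrix.sum_apply, Finset.sum_apply,
    Finset.sum_mul]
  exact Finset.sum_comm

lemma qInner_sum {κ : Type*} [Fintype κ] (v : (ι → Bool) → ℂ)
    (w : κ → (ι → Bool) → ℂ) : qInner v (∑ q, w q) = ∑ q, qInner v (w q) := by
  simp only [qInner, Finset.sum_apply, Finset.mul_sum]
  exact Finset.sum_comm

lemma gsH_sum_qform_nonneg (v : (ι → Bool) → ℂ) :
    0 ≤ (qInner v ((∑ q, gsH En q).mulVec v)).re := by
  rw [sum_mulVec, qInner_sum, Complex.re_sum]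
  exact Finset.sum_nonneg fun q _ => gs_qform_nonneg En q v

lemma gsH_sum_ground : IsGroundEnergy (∑ q, gsH En q) 0 := by
  constructor
  · refine ⟨gsφ En, fun h => gsφ_ne_zero En (fun _ => false) (congrFun h _), ?_⟩
    rw [sum_mulVec]
    simp only [gsH_mulVec_gsφ]
    simp
  · intro μ hμ
    exact eig_nonneg_of_qform _ (gsH_sum_qform_nonneg En) hμ

lemma gsH_sum_kernel {v : (ι → Bool) → ℂ}
    (hv : (∑ q, gsH En q).mulVec v = 0) :
    ∀ q y, v (gflip q y) = (gsr En q y : ℂ) * v y := by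
  have hsum : ∑ q, (qInner v ((gsH En q).mulVec v)).re = 0 := by
    rw [← Complex.re_sum, ← qInner_sum, ← sum_mulVec, hv]
    simp [qInner]
  have hzero : ∀ q ∈ Finset.univ, (qInner v ((gsH En q).mulVec v)).re = 0 :=
    (Finset.sum_eq_zero_iff_of_nonneg (fun q _ => gs_qform_nonneg En q v)).mp hsum
  intro q y
  exact gs_qform_eq_zero En q v (hzero q (Finset.mem_univ q)) y

lemma gsH_sum_unique {v : (ι → Bool) → ℂ}
    (hv : (∑ q, gsH En q).mulVec v = 0) : ∃ c : ℂ, v = c • gsφ En := by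
  have hrel := gsH_sum_kernel En hv
  set y₀ : ι → Bool := fun _ => false with hy₀
  have key : ∀ N : ℕ, ∀ y : ι → Bool,
      (Finset.univ.filter (fun i => y i)).card = N →
      v y * gsφ En y₀ = v y₀ * gsφ En y := by
    intro N
    induction N with
    | zero =>
      intro y hy
      have : y = y₀ := by
        funext i
        have hi : i ∉ Finset.univ.filter (fun i => y i) := by
          rw [Finset.card_eq_zero.mp hy]; exact Finset.notMem_empty i
        simp only [Finset.mem_filter, Finset.mem_univ, true_and] at hi
        simp [hy₀, hi]
      rw [this]
    | succ N ih =>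
      intro y hy
      have hne : (Finset.univ.filter (fun i => y i)).Nonempty := by
        rw [← Finset.card_pos, hy]; omega
      obtain ⟨i, hi⟩ := hne
      simp only [Finset.mem_filter, Finset.mem_univ, true_and] at hi
      set y' := gflip i y with hy'
      have hyy' : y = gflip i y' := by rw [hy', gflip_gflip]
      have hcard : (Finset.univ.filter (fun j => y' j)).card = N := by
        have hset : Finset.univ.filter (fun j => y' j)
            = (Finset.univ.filter (fun j => y j)).erase i := by
          ext j
          simp only [Finset.mem_filter, Finset.mem_univ, true_and, Finset.mem_erase]
          by_cases hj : j = i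
          · subst hj
            simp [hy', gflip_apply_self, hi]
          · simp [hy', gflip_apply_ne i j y hj, hj]
        rw [hset, Finset.card_erase_of_mem (by simp [hi]), hy]
        omega
      have h1 : v y = (gsr En i y' : ℂ) * v y' := by rw [hyy', hrel i y']
      have h2 : gsφ En y = (gsr En i y' : ℂ) * gsφ En y' := by rw [hyy', gsφ_flip]
      rw [h1, h2, mul_assoc, ih y' hcard]
      ring
  refine ⟨v y₀ / gsφ En y₀, ?_⟩
  funext y
  have := key _ y rfl
  have hφ0 := gsφ_ne_zero En y₀
  simp only [Pi.smul_apply, smul_eq_mul]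
  field_simp
  linear_combination this


lemma bv_gflip {n m : ℕ} (q : Fin n ⊕ Fin m) (y : (Fin n ⊕ Fin m) → Bool) (v : Fin n ⊕ Fin m) :
    bv (gflip q y v) = bv (y v) + (if v = q then (bv (!(y q)) - bv (y q)) else 0) := by
  by_cases h : v = q
  · subst h; simp [gflip_apply_self]
  · simp [gflip_apply_ne q v y h, h]

lemma BM.energy_gflip {n m : ℕ} (B : BM n m) (q : Fin n ⊕ Fin m) (y : (Fin n ⊕ Fin m) → Bool) :
    B.energy (gflip q y) = B.energy y
      - (bv (!(y q)) - bv (y q)) * (B.a q + ∑ v, B.W q v * bv (y v)) := by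
  set d := bv (!(y q)) - bv (y q) with hd
  have hlin : ∑ v, B.a v * bv (gflip q y v) = (∑ v, B.a v * bv (y v)) + B.a q * d := by
    simp only [bv_gflip, ← hd, mul_add, Finset.sum_add_distrib, mul_ite, mul_zero,
      Finset.sum_ite_eq', Finset.mem_univ, if_true]
  have hsymm : ∑ u, B.W u q * bv (y u) = ∑ u, B.W q u * bv (y u) :=
    Finset.sum_congr rfl fun u _ => by rw [B.symm]
  have hquad : ∑ u, ∑ v, B.W u v * bv (gflip q y u) * bv (gflip q y v)
      = (∑ u, ∑ v, B.W u v * bv (y u) * bv (y v)) + 2 * d * ∑ v, B.W q v * bv (y v) := by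
    have inner : ∀ u, ∑ v, B.W u v * bv (gflip q y u) * bv (gflip q y v)
        = (∑ v, B.W u v * bv (y u) * bv (y v))
          + (if u = q then d else 0) * (∑ v, B.W u v * bv (y v))
          + B.W u q * bv (y u) * d + (if u = q then d else 0) * B.W u q * d := by
      intro u
      have expand : ∀ v, B.W u v * bv (gflip q y u) * bv (gflip q y v)
          = B.W u v * bv (y u) * bv (y v)
            + (if u = q then d else 0) * (B.W u v * bv (y v))
            + (if v = q then B.W u v * bv (y u) * d else 0)
            + (if v = q then (if u = q then d else 0) * B.W u v * d else 0) := by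
        intro v
        rw [bv_gflip, bv_gflip, ← hd]
        by_cases hu : u = q <;> by_cases hv : v = q <;> simp [hu, hv] <;> ring
      rw [Finset.sum_congr rfl fun v _ => expand v]
      simp only [Finset.sum_add_distrib, Finset.sum_ite_eq', Finset.mem_univ, if_true,
        ← Finset.mul_sum]
    rw [Finset.sum_congr rfl fun u _ => inner u]
    simp only [Finset.sum_add_distrib, Finset.sum_ite_eq', Finset.mem_univ, if_true,
      ite_mul, zero_mul, Finset.sum_mul]
    rw [← Finset.sum_mul, hsymm, B.diag]
    ring
  rw [BM.energy, BM.energy, hlin, hquad]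
  ring

open Classical in
/-- the neighborhood of a node: itself together with its graph neighbors -/
noncomputable def BM.nbhd {n m : ℕ} (B : BM n m) (q : Fin n ⊕ Fin m) :
    Finset (Fin n ⊕ Fin m) :=
  insert q (Finset.univ.filter (fun u => B.W q u ≠ 0))

lemma BM.mem_nbhd_self {n m : ℕ} (B : BM n m) (q : Fin n ⊕ Fin m) : q ∈ B.nbhd q :=
  Finset.mem_insert_self _ _

lemma BM.mem_nbhd_of_W {n m : ℕ} (B : BM n m) {q u : Fin n ⊕ Fin m}
    (h : B.W q u ≠ 0) : u ∈ B.nbhd q := by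
  classical
  apply Finset.mem_insert_of_mem
  simp only [Finset.mem_filter, Finset.mem_univ, true_and]
  convert h

lemma BM.card_nbhd {n m : ℕ} (B : BM n m) (q : Fin n ⊕ Fin m) :
    (B.nbhd q).card ≤ B.deg q + 1 := by
  classical
  refine le_trans (Finset.card_insert_le _ _) ?_
  rw [BM.deg]

lemma BM.energy_diff_local {n m : ℕ} (B : BM n m) (q : Fin n ⊕ Fin m)
    (y y' : (Fin n ⊕ Fin m) → Bool) (h : ∀ i ∈ B.nbhd q, y i = y' i) :
    B.energy y - B.energy (gflip q y) = B.energy y' - B.energy (gflip q y') := by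
  rw [B.energy_gflip q y, B.energy_gflip q y']
  have hq : y q = y' q := h q (B.mem_nbhd_self q)
  have hsum : ∑ v, B.W q v * bv (y v) = ∑ v, B.W q v * bv (y' v) := by
    refine Finset.sum_congr rfl fun v _ => ?_
    by_cases hw : B.W q v = 0
    · rw [hw]; ring
    · rw [h v (B.mem_nbhd_of_W hw)]
  rw [hq, hsum]
  ring

lemma BM.gsr_local {n m : ℕ} (B : BM n m) (q : Fin n ⊕ Fin m)
    (y y' : (Fin n ⊕ Fin m) → Bool) (h : ∀ i ∈ B.nbhd q, y i = y' i) :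
    gsr B.energy q y = gsr B.energy q y' := by
  rw [gsr, gsr, B.energy_diff_local q y y' h]

lemma BM.gsH_local {n m : ℕ} (B : BM n m) (q : Fin n ⊕ Fin m) :
    LocalOn (B.nbhd q) (gsH B.energy q) := by
  constructor
  · rintro x y ⟨i, hiS, hixy⟩
    have hiq : i ≠ q := fun h => hiS (h ▸ B.mem_nbhd_self q)
    simp only [gsH, Matrix.of_apply]
    rw [if_neg, if_neg]
    · intro h
      exact hixy ((congrFun h i).trans (gflip_apply_ne q i x hiq)).symm
    · intro h
      exact hixy (congrFun h i).symm
  · intro x y x' y' hxS hyS hout hout'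
    have hq : x q = x' q := hxS q (B.mem_nbhd_self q)
    have hiff1 : y = x ↔ y' = x' := by
      constructor
      · intro h
        funext i
        by_cases hi : i ∈ B.nbhd q
        · rw [← hyS i hi, h, hxS i hi]
        · rw [hout' i hi]
      · intro h
        funext i
        by_cases hi : i ∈ B.nbhd q
        · rw [hyS i hi, h, ← hxS i hi]
        · rw [hout i hi]
    have hiff2 : y = gflip q x ↔ y' = gflip q x' := by
      constructor
      · intro h
        funext i
        by_cases hiq : i = q
        · subst hiq
          rw [← hyS i (B.mem_nbhd_self i), h, gflip_apply_self, gflip_apply_self, hq]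
        · rw [gflip_apply_ne q i x' hiq]
          by_cases hi : i ∈ B.nbhd q
          · rw [← hyS i hi, h, gflip_apply_ne q i x hiq, hxS i hi]
          · rw [hout' i hi]
      · intro h
        funext i
        by_cases hiq : i = q
        · subst hiq
          rw [hyS i (B.mem_nbhd_self i), h, gflip_apply_self, gflip_apply_self, hq]
        · rw [gflip_apply_ne q i x hiq]
          by_cases hi : i ∈ B.nbhd q
          · rw [hyS i hi, h, gflip_apply_ne q i x' hiq, ← hxS i hi]
          · rw [hout i hi]
    have hr : gsr B.energy q x = gsr B.energy q x' := B.gsr_local q x x' hxS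
    simp only [gsH, Matrix.of_apply]
    by_cases h1 : y = x
    · rw [if_pos h1, if_pos (hiff1.mp h1), hr]
    · rw [if_neg h1, if_neg (fun h => h1 (hiff1.mpr h))]
      by_cases h2 : y = gflip q x
      · rw [if_pos h2, if_pos (hiff2.mp h2)]
      · rw [if_neg h2, if_neg (fun h => h2 (hiff2.mpr h))]

lemma sum_elim_split {n m : ℕ} (g : ((Fin n ⊕ Fin m) → Bool) → ℝ) :
    ∑ y, g y = ∑ x : Fin n → Bool, ∑ h : Fin m → Bool, g (Sum.elim x h) := by
  rw [← Equiv.sum_comp (Equiv.sumArrowEquivProdArrow (Fin n) (Fin m) Bool).symm g]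
  rw [Fintype.sum_prod_type]
  rfl

lemma BM.dist_eq_gsφ {n m : ℕ} (B : BM n m) (x : Fin n → Bool) :
    B.dist x = ∑ hb : Fin m → Bool, Complex.normSq (gsφ B.energy (Sum.elim x hb)) := by
  have hZ : ∑ z, Real.exp (-(B.energy z))
      = ∑ y : Fin n → Bool, B.output y := by
    rw [sum_elim_split (fun z => Real.exp (-(B.energy z)))]
    rfl
  rw [BM.dist, BM.output]
  rw [Finset.sum_congr rfl fun hb _ => normSq_gsφ B.energy (Sum.elim x hb)]
  rw [← Finset.sum_div, hZ]

end StoqPaper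

open StoqPaper
theorem statement_4 (n m k' : ℕ) (B : BM n m) (hdeg : ∀ v, B.deg v ≤ k') :
    ∃ (Hsff : (Fin n ⊕ Fin m) →
        Matrix ((Fin n ⊕ Fin m) → Bool) ((Fin n ⊕ Fin m) → Bool) ℂ)
      (E : (Fin n ⊕ Fin m) → ℝ) (φ : ((Fin n ⊕ Fin m) → Bool) → ℂ),
      (∀ q, (Hsff q).IsHermitian) ∧
      (∀ q, KLocal (k' + 1) (Hsff q)) ∧
      (∀ q, StoqEntries (Hsff q)) ∧
      (∀ q, IsGroundEnergy (Hsff q) (E q)) ∧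
      (∀ q, (Hsff q).mulVec φ = ((E q : ℝ) : ℂ) • φ) ∧
      IsGroundEnergy (∑ q, Hsff q) (∑ q, E q) ∧
      l2norm φ = 1 ∧
      (∀ v, (∑ q, Hsff q).mulVec v = (((∑ q, E q : ℝ)) : ℂ) • v → ∃ c : ℂ, v = c • φ) ∧
      (∀ x : (Fin n) → Bool,
        B.dist x = ∑ hb : Fin m → Bool, Complex.normSq (φ (Sum.elim x hb))) := by

  refine ⟨gsH B.energy, fun _ => 0, gsφ B.energy, ?_, ?_, ?_, ?_, ?_, ?_, ?_, ?_, ?_⟩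
  · exact fun q => gsH_hermitian B.energy q
  · intro q
    exact ⟨B.nbhd q, le_trans (B.card_nbhd q) (Nat.succ_le_succ (hdeg q)), B.gsH_local q⟩
  · exact fun q => gsH_stoq B.energy q
  · exact fun q => gsH_ground B.energy q
  · intro q
    rw [gsH_mulVec_gsφ]
    simp
  · simpa using gsH_sum_ground B.energy
  · exact l2norm_gsφ B.energy
  · intro v hv
    apply gsH_sum_unique B.energy
    simpa using hv
  · exact fun x => B.dist_eq_gsφ x
end

section
/- Let H_c be a k-local classical Hamiltonian on n bits with T terms in which each bit is acted on by at most k' terms, and let p be its Gibbs distribution. Then for every ε > 0 there exists a Restricted Boltzmann Machine with n visible nodes, at most 2^k·T hidden nodes, and every node having at most k'·2^k connections, whose distribution is within total variation distance ε of p. -/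
open scoped BigOperators

namespace StoqPaper

namespace Stmt7Aux

variable {n k T : ℕ}

/-- Index of a bit of `S b` inside `Fin k`. -/
noncomputable def idx (S : Fin T → Finset (Fin n)) (hcard : ∀ b, (S b).card ≤ k)
    (b : Fin T) (i : {x // x ∈ S b}) : Fin k :=
  Fin.castLE (hcard b) ((S b).equivFin i)

/-- A hidden configuration `z` is active for term `b` if it vanishes outside the
range of the embedding of `S b` into `Fin k`. -/
def active (S : Fin T → Finset (Fin n)) (b : Fin T) (z : Fin k → Bool) : Prop :=
  ∀ j : Fin k, (S b).card ≤ (j : ℕ) → z j = false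

instance (S : Fin T → Finset (Fin n)) (b : Fin T) (z : Fin k → Bool) :
    Decidable (active S b z) := by unfold active; infer_instance

/-- The canonical active hidden configuration matching `x` for term `b`. -/
noncomputable def z0 (S : Fin T → Finset (Fin n)) (b : Fin T) (x : Fin n → Bool) :
    Fin k → Bool :=
  fun j => if h : (j : ℕ) < (S b).card then x ((S b).equivFin.symm ⟨(j : ℕ), h⟩ : {y // y ∈ S b}) else false

/-- Extension of `z` (pulled back along `idx`) to a full configuration. -/
noncomputable def xw (S : Fin T → Finset (Fin n)) (hcard : ∀ b, (S b).card ≤ k)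
    (b : Fin T) (z : Fin k → Bool) : Fin n → Bool :=
  fun i => if h : i ∈ S b then z (idx S hcard b ⟨i, h⟩) else false

/-- The number of mismatches between `x` and `z` on `S b` (as a real number). -/
noncomputable def mis (S : Fin T → Finset (Fin n)) (hcard : ∀ b, (S b).card ≤ k)
    (b : Fin T) (z : Fin k → Bool) (x : Fin n → Bool) : ℝ :=
  ∑ i ∈ (S b).attach, if x i.1 = z (idx S hcard b i) then (0 : ℝ) else 1

lemma mis_nonneg (S : Fin T → Finset (Fin n)) (hcard : ∀ b, (S b).card ≤ k)
    (b : Fin T) (z : Fin k → Bool) (x : Fin n → Bool) :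
    0 ≤ mis S hcard b z x :=
  Finset.sum_nonneg (fun i _ => by split <;> norm_num)

lemma mis_eq_zero_iff (S : Fin T → Finset (Fin n)) (hcard : ∀ b, (S b).card ≤ k)
    (b : Fin T) (z : Fin k → Bool) (x : Fin n → Bool) :
    mis S hcard b z x = 0 ↔ ∀ i : {y // y ∈ S b}, x i.1 = z (idx S hcard b i) := by
  rw [mis, Finset.sum_eq_zero_iff_of_nonneg (fun i _ => by split <;> norm_num)]
  constructor
  · intro h i
    have := h i (Finset.mem_attach _ _)
    by_contra hne
    rw [if_neg hne] at this
    norm_num at this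
  · intro h i _
    rw [if_pos (h i)]

lemma one_le_mis (S : Fin T → Finset (Fin n)) (hcard : ∀ b, (S b).card ≤ k)
    (b : Fin T) (z : Fin k → Bool) (x : Fin n → Bool)
    (h : mis S hcard b z x ≠ 0) : 1 ≤ mis S hcard b z x := by
  rw [Ne, mis_eq_zero_iff] at h
  push_neg at h
  obtain ⟨i, hi⟩ := h
  have : (if x i.1 = z (idx S hcard b i) then (0:ℝ) else 1) = 1 := if_neg hi
  calc (1:ℝ) = (if x i.1 = z (idx S hcard b i) then (0:ℝ) else 1) := this.symm
    _ ≤ mis S hcard b z x :=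
      Finset.single_le_sum (f := fun i => if x i.1 = z (idx S hcard b i) then (0:ℝ) else 1)
        (fun i _ => by split <;> norm_num) (Finset.mem_attach _ _)

lemma z0_active (S : Fin T → Finset (Fin n)) (b : Fin T) (x : Fin n → Bool) :
    active S b (z0 (k := k) S b x) := fun j hj => dif_neg (not_lt.2 hj)

lemma idx_lt (S : Fin T → Finset (Fin n)) (hcard : ∀ b, (S b).card ≤ k)
    (b : Fin T) (i : {y // y ∈ S b}) : ((idx S hcard b i : Fin k) : ℕ) < (S b).card := by
  simp [idx]

lemma z0_idx (S : Fin T → Finset (Fin n)) (hcard : ∀ b, (S b).card ≤ k)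
    (b : Fin T) (x : Fin n → Bool) (i : {y // y ∈ S b}) :
    z0 S b x (idx S hcard b i) = x i.1 := by
  rw [z0, dif_pos (idx_lt S hcard b i)]
  congr 1
  have : (⟨((idx S hcard b i : Fin k) : ℕ), idx_lt S hcard b i⟩ : Fin (S b).card)
      = (S b).equivFin i := by
    apply Fin.ext; simp [idx]
  rw [this, Equiv.symm_apply_apply]

lemma mis_z0 (S : Fin T → Finset (Fin n)) (hcard : ∀ b, (S b).card ≤ k)
    (b : Fin T) (x : Fin n → Bool) : mis S hcard b (z0 S b x) x = 0 := by
  rw [mis_eq_zero_iff]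
  intro i
  rw [z0_idx]

lemma eq_z0 (S : Fin T → Finset (Fin n)) (hcard : ∀ b, (S b).card ≤ k)
    (b : Fin T) (z : Fin k → Bool) (x : Fin n → Bool)
    (hz : active S b z) (hm : mis S hcard b z x = 0) : z = z0 S b x := by
  rw [mis_eq_zero_iff] at hm
  funext j
  by_cases h : (j : ℕ) < (S b).card
  · set i : {y // y ∈ S b} := (S b).equivFin.symm ⟨(j : ℕ), h⟩ with hi
    have hidx : idx S hcard b i = j := by
      apply Fin.ext
      simp [idx, hi, Equiv.apply_symm_apply]
    have h1 : x i.1 = z j := by rw [← hidx]; exact hm i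
    have h2 : z0 S b x j = x i.1 := by rw [z0, dif_pos h]
    rw [h2, h1]
  · rw [hz j (not_lt.1 h), z0, dif_neg h]


noncomputable def tval (S : Fin T → Finset (Fin n)) (hcard : ∀ b, (S b).card ≤ k)
    (hterm : Fin T → (Fin n → Bool) → ℝ) (C : ℝ) (b : Fin T) (z : Fin k → Bool) : ℝ :=
  Real.log (C * Real.exp (-(hterm b (xw S hcard b z))) - 1)

noncomputable def Wmat (S : Fin T → Finset (Fin n)) (hcard : ∀ b, (S b).card ≤ k)
    (M : ℝ) (i : Fin n) (u : Fin T × (Fin k → Bool)) : ℝ :=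
  if h : i ∈ S u.1 then
    (if active S u.1 u.2 then (if u.2 (idx S hcard u.1 ⟨i, h⟩) then M else -M) else 0)
  else 0

noncomputable def Nw (S : Fin T → Finset (Fin n)) (hcard : ∀ b, (S b).card ≤ k)
    (b : Fin T) (z : Fin k → Bool) : ℝ :=
  ∑ i ∈ (S b).attach, if z (idx S hcard b i) then (1 : ℝ) else 0

noncomputable def cvec (S : Fin T → Finset (Fin n)) (hcard : ∀ b, (S b).card ≤ k)
    (hterm : Fin T → (Fin n → Bool) → ℝ) (C M : ℝ) (u : Fin T × (Fin k → Bool)) : ℝ :=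
  if active S u.1 u.2 then tval S hcard hterm C u.1 u.2 - M * Nw S hcard u.1 u.2 else 0

noncomputable def theta (S : Fin T → Finset (Fin n)) (hcard : ∀ b, (S b).card ≤ k)
    (hterm : Fin T → (Fin n → Bool) → ℝ) (C M : ℝ) (u : Fin T × (Fin k → Bool))
    (x : Fin n → Bool) : ℝ :=
  cvec S hcard hterm C M u + ∑ i, Wmat S hcard M i u * bv (x i)

lemma Wmat_eq_zero_of_not_active (S : Fin T → Finset (Fin n)) (hcard : ∀ b, (S b).card ≤ k)
    (M : ℝ) (i : Fin n) (u : Fin T × (Fin k → Bool)) (hz : ¬ active S u.1 u.2) :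
    Wmat S hcard M i u = 0 := by
  simp [Wmat, hz]

lemma theta_eq (S : Fin T → Finset (Fin n)) (hcard : ∀ b, (S b).card ≤ k)
    (hterm : Fin T → (Fin n → Bool) → ℝ) (C M : ℝ) (u : Fin T × (Fin k → Bool))
    (x : Fin n → Bool) :
    theta S hcard hterm C M u x =
      if active S u.1 u.2 then tval S hcard hterm C u.1 u.2 - M * mis S hcard u.1 u.2 x
      else 0 := by
  by_cases hz : active S u.1 u.2
  · rw [if_pos hz, theta, cvec, if_pos hz]
    have hzero : ∀ i ∈ Finset.univ, i ∉ S u.1 → Wmat S hcard M i u * bv (x i) = 0 := by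
      intro i _ hi
      rw [Wmat, dif_neg hi, zero_mul]
    have hrestr : ∑ i, Wmat S hcard M i u * bv (x i)
        = ∑ i ∈ S u.1, Wmat S hcard M i u * bv (x i) :=
      (Finset.sum_subset (Finset.subset_univ _) hzero).symm
    rw [hrestr, ← Finset.sum_attach (S u.1) (fun i => Wmat S hcard M i u * bv (x i))]
    have key : ∑ i ∈ (S u.1).attach, Wmat S hcard M i.1 u * bv (x i.1)
        = M * Nw S hcard u.1 u.2 - M * mis S hcard u.1 u.2 x := by
      rw [Nw, mis, Finset.mul_sum, Finset.mul_sum, ← Finset.sum_sub_distrib]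
      apply Finset.sum_congr rfl
      intro i _
      rw [Wmat, dif_pos i.2, if_pos hz]
      simp only [Subtype.coe_eta]
      cases hzi : u.2 (idx S hcard u.1 i) <;> cases hxi : x i.1 <;>
        simp [bv, hxi, hzi] <;> ring
    rw [key]
    ring
  · rw [if_neg hz, theta, cvec, if_neg hz]
    rw [Finset.sum_eq_zero fun i _ => by
      rw [Wmat_eq_zero_of_not_active S hcard M i u hz, zero_mul]]
    ring

noncomputable def fac (S : Fin T → Finset (Fin n)) (hcard : ∀ b, (S b).card ≤ k)
    (hterm : Fin T → (Fin n → Bool) → ℝ) (C M : ℝ) (u : Fin T × (Fin k → Bool))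
    (x : Fin n → Bool) : ℝ :=
  1 + Real.exp (theta S hcard hterm C M u x)

open Classical in
noncomputable def beta (S : Fin T → Finset (Fin n)) (hterm : Fin T → (Fin n → Bool) → ℝ)
    (C : ℝ) (u : Fin T × (Fin k → Bool)) (x : Fin n → Bool) : ℝ :=
  if active S u.1 u.2 then
    (if u.2 = z0 S u.1 x then C * Real.exp (-(hterm u.1 x)) else 1) else 2

open Classical in
lemma prod_beta (S : Fin T → Finset (Fin n)) (hterm : Fin T → (Fin n → Bool) → ℝ)
    (C : ℝ) (b : Fin T) (x : Fin n → Bool) :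
    ∏ z : Fin k → Bool, beta S hterm C (b, z) x
      = (C * Real.exp (-(hterm b x))) *
        ∏ _z ∈ Finset.univ.filter (fun z : Fin k → Bool => ¬ active S b z), (2 : ℝ) := by
  rw [← Finset.prod_filter_mul_prod_filter_not Finset.univ (fun z => active S b z)]
  congr 1
  · have hz0 : beta S hterm C (b, z0 (k := k) S b x) x = C * Real.exp (-(hterm b x)) := by
      rw [beta, if_pos (z0_active S b x), if_pos rfl]
    rw [← hz0]
    apply Finset.prod_eq_single (z0 (k := k) S b x)
    · intro z hz hne
      rw [Finset.mem_filter] at hz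
      rw [beta, if_pos hz.2, if_neg hne]
    · intro h
      exact absurd (Finset.mem_filter.2 ⟨Finset.mem_univ _, z0_active S b x⟩) h
  · apply Finset.prod_congr rfl
    intro z hz
    rw [Finset.mem_filter] at hz
    rw [beta, if_neg hz.2]

lemma sum_prod_hidden (m : ℕ) (θ : Fin m → ℝ) :
    ∑ h : Fin m → Bool, Real.exp (∑ j, θ j * bv (h j)) = ∏ j, (1 + Real.exp (θ j)) := by
  have h1 : ∀ h : Fin m → Bool,
      Real.exp (∑ j, θ j * bv (h j)) = ∏ j, Real.exp (θ j * bv (h j)) :=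
    fun h => Real.exp_sum _ _
  simp_rw [h1]
  rw [show (Finset.univ : Finset (Fin m → Bool)) = Fintype.piFinset (fun _ => Finset.univ)
    from (Fintype.piFinset_univ).symm]
  rw [← Finset.prod_univ_sum (fun _ => (Finset.univ : Finset Bool))
    (fun j b => Real.exp (θ j * bv b))]
  apply Finset.prod_congr rfl
  intro j _
  rw [Fintype.sum_bool]
  simp [bv, add_comm]

lemma card_filter_equiv {α β : Type*} [Fintype α] [Fintype β] [DecidableEq β] (e : α ≃ β)
    (P : β → Prop) [DecidablePred P] :
    (Finset.univ.filter fun a => P (e a)).card = (Finset.univ.filter P).card := by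
  apply Finset.card_bij (fun a _ => e a)
  · intro a ha
    simp only [Finset.mem_filter, Finset.mem_univ, true_and] at *
    exact ha
  · intro a1 _ a2 _ h
    exact e.injective h
  · intro b hb
    simp only [Finset.mem_filter, Finset.mem_univ, true_and] at hb
    exact ⟨e.symm b, by simp [hb], by simp⟩

lemma tv_aux {α : Type*} [Fintype α] [Nonempty α] (f g : α → ℝ) (ε : ℝ) (hε : 0 ≤ ε)
    (hg : ∀ x, 0 < g x) (h1 : ∀ x, g x ≤ f x) (h2 : ∀ x, f x ≤ (1 + ε) * g x) :
    tvDist (fun x => f x / ∑ y, f y) (fun x => g x / ∑ y, g y) ≤ ε := by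
  have hA : 0 < ∑ y, g y := Finset.sum_pos (fun y _ => hg y) Finset.univ_nonempty
  have hAB : (∑ y, g y) ≤ ∑ y, f y := Finset.sum_le_sum (fun y _ => h1 y)
  have hB : 0 < ∑ y, f y := lt_of_lt_of_le hA hAB
  have hBA : (∑ y, f y) ≤ (1 + ε) * ∑ y, g y := by
    rw [Finset.mul_sum]
    exact Finset.sum_le_sum (fun y _ => h2 y)
  set A := ∑ y, g y
  set B := ∑ y, f y
  have key : ∀ x, |f x / B - g x / A| ≤ ε * (g x / A) := by
    intro x
    rw [abs_sub_le_iff]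
    constructor
    · have e1 : f x / B ≤ ((1 + ε) * g x) / B := by gcongr; exact h2 x
      have e2 : ((1 + ε) * g x) / B ≤ ((1 + ε) * g x) / A := by
        apply div_le_div_of_nonneg_left _ hA hAB
        have := (hg x).le
        positivity
      have e3 : ((1 + ε) * g x) / A = g x / A + ε * (g x / A) := by ring
      linarith
    · have s1 : g x / B ≤ f x / B := by gcongr; exact h1 x
      have s2 : g x / A - g x / B = g x * (B - A) / (A * B) := by
        field_simp
      have s3 : g x * (B - A) / (A * B) ≤ g x * (ε * A) / (A * B) := by
        gcongr
        · exact (hg x).le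
        · linarith
      have s4 : g x * (ε * A) / (A * B) = ε * (g x / B) := by
        field_simp
      have s5 : ε * (g x / B) ≤ ε * (g x / A) := by
        gcongr
        exact (hg x).le
      linarith
  have hsum : ∑ x, |f x / B - g x / A| ≤ ∑ x, ε * (g x / A) :=
    Finset.sum_le_sum (fun x _ => key x)
  have hsum2 : ∑ x, ε * (g x / A) = ε := by
    rw [← Finset.mul_sum, ← Finset.sum_div, div_self hA.ne', mul_one]
  rw [tvDist]
  rw [hsum2] at hsum
  linarith

end Stmt7Aux

end StoqPaper

open StoqPaper
open StoqPaper.Stmt7Aux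
open Classical in
theorem statement_7 (n k k' T : ℕ) (S : Fin T → Finset (Fin n))
    (hterm : Fin T → ((Fin n) → Bool) → ℝ)
    (hcard : ∀ b, (S b).card ≤ k)
    (hdep : ∀ b, DependsOnlyOn (S b) (hterm b))
    (hbit : ∀ i : Fin n, (Finset.univ.filter (fun b => i ∈ S b)).card ≤ k') :
    ∀ ε : ℝ, 0 < ε →
      ∃ (m : ℕ) (a : Fin n → ℝ) (c : Fin m → ℝ) (W : Fin n → Fin m → ℝ),
        m ≤ 2 ^ k * T ∧
        (∀ i : Fin n, (Finset.univ.filter (fun j => W i j ≠ 0)).card ≤ k' * 2 ^ k) ∧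
        (∀ j : Fin m, (Finset.univ.filter (fun i => W i j ≠ 0)).card ≤ k' * 2 ^ k) ∧
        ∀ f : ((Fin n) → Bool) → ℝ,
          f = (fun x => ∑ h : Fin m → Bool, Real.exp ((∑ i, a i * bv (x i)) +
              (∑ j, c j * bv (h j)) + ∑ i, ∑ j, W i j * bv (x i) * bv (h j))) →
          tvDist (fun x => f x / ∑ y, f y) (gibbs (fun y => ∑ b, hterm b y)) ≤ ε := by
  intro ε hε
  classical
  set K : ℝ := ∑ b : Fin T, ∑ y : Fin n → Bool, |hterm b y| with hKdef
  have hK0 : 0 ≤ K :=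
    Finset.sum_nonneg fun b _ => Finset.sum_nonneg fun y _ => abs_nonneg _
  have hKb : ∀ b y, |hterm b y| ≤ K := by
    intro b y
    calc |hterm b y| ≤ ∑ y', |hterm b y'| :=
        Finset.single_le_sum (f := fun y' => |hterm b y'|)
          (fun y' _ => abs_nonneg _) (Finset.mem_univ y)
      _ ≤ K := Finset.single_le_sum (f := fun b => ∑ y, |hterm b y|)
          (fun b _ => Finset.sum_nonneg fun y _ => abs_nonneg _) (Finset.mem_univ b)
  set C : ℝ := Real.exp (K + 1) with hCdef
  have hC1 : ∀ b y, (1 : ℝ) < C * Real.exp (-(hterm b y)) := by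
    intro b y
    rw [hCdef, ← Real.exp_add, Real.one_lt_exp_iff]
    have h1 := hKb b y
    have h2 := le_abs_self (hterm b y)
    linarith
  set N : ℕ := T * 2 ^ k + 1 with hNdef
  set δ : ℝ := min (Real.log (1 + ε) / N) 1 with hδdef
  have hδ0 : 0 < δ :=
    lt_min (div_pos (Real.log_pos (by linarith)) (by positivity)) one_pos
  have hδ1 : δ ≤ 1 := min_le_right _ _
  set M : ℝ := 2 * K + 1 - Real.log δ with hMdef
  have hM0 : 0 ≤ M := by
    have := Real.log_nonpos hδ0.le hδ1
    rw [hMdef]; linarith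
  have hcardσ : Fintype.card (Fin T × (Fin k → Bool)) = 2 ^ k * T := by
    simp [Fintype.card_fun, mul_comm]
  set e : Fin (2 ^ k * T) ≃ Fin T × (Fin k → Bool) :=
    (Fintype.equivFinOfCardEq hcardσ).symm with hedef
  refine ⟨2 ^ k * T, fun _ => 0, fun j => cvec S hcard hterm C M (e j),
    fun i j => Wmat S hcard M i (e j), le_refl _, ?_, ?_, ?_⟩
  · -- visible degrees
    intro i
    rw [card_filter_equiv e (fun u => Wmat S hcard M i u ≠ 0)]
    have hsub : (Finset.univ.filter fun u : Fin T × (Fin k → Bool) =>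
        Wmat S hcard M i u ≠ 0)
        ⊆ (Finset.univ.filter fun b => i ∈ S b) ×ˢ Finset.univ := by
      intro u hu
      rw [Finset.mem_filter] at hu
      rw [Finset.mem_product]
      refine ⟨Finset.mem_filter.2 ⟨Finset.mem_univ _, ?_⟩, Finset.mem_univ _⟩
      by_contra hmem
      exact hu.2 (by rw [Wmat, dif_neg hmem])
    calc _ ≤ ((Finset.univ.filter fun b => i ∈ S b) ×ˢ
          (Finset.univ : Finset (Fin k → Bool))).card := Finset.card_le_card hsub
      _ = (Finset.univ.filter fun b => i ∈ S b).card *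
          (Finset.univ : Finset (Fin k → Bool)).card := Finset.card_product _ _
      _ ≤ k' * 2 ^ k := by
          apply Nat.mul_le_mul (hbit i)
          rw [Finset.card_univ, Fintype.card_fun]
          simp
  · -- hidden degrees
    intro j
    have hsub : (Finset.univ.filter fun i => Wmat S hcard M i (e j) ≠ 0)
        ⊆ S (e j).1 := by
      intro i hi
      rw [Finset.mem_filter] at hi
      by_contra hmem
      exact hi.2 (by rw [Wmat, dif_neg hmem])
    have h1 := Finset.card_le_card hsub
    rcases Finset.eq_empty_or_nonempty (S (e j).1) with he | ⟨i, hi⟩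
    · rw [he] at h1
      simpa using le_trans h1 (Nat.zero_le _)
    · have hk'pos : 0 < k' := by
        have hmem : (e j).1 ∈ Finset.univ.filter (fun b => i ∈ S b) :=
          Finset.mem_filter.2 ⟨Finset.mem_univ _, hi⟩
        exact lt_of_lt_of_le (Finset.card_pos.2 ⟨_, hmem⟩) (hbit i)
      calc (Finset.univ.filter fun i => Wmat S hcard M i (e j) ≠ 0).card
          ≤ (S (e j).1).card := h1
        _ ≤ k := hcard _
        _ ≤ 2 ^ k := (Nat.lt_two_pow_self (n := k)).le
        _ ≤ k' * 2 ^ k := Nat.le_mul_of_pos_left _ hk'pos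
  · -- distribution bound
    intro f hf
    subst hf
    set H : (Fin n → Bool) → ℝ := fun y => ∑ b, hterm b y with hHdef
    set D : ℝ := ∏ b : Fin T,
      (C * ∏ _z ∈ Finset.univ.filter (fun z : Fin k → Bool => ¬ active S b z), (2 : ℝ))
      with hDdef
    have hD0 : 0 < D := by
      rw [hDdef]
      exact Finset.prod_pos fun b _ => mul_pos (Real.exp_pos _)
        (Finset.prod_pos fun _ _ => two_pos)
    set g : (Fin n → Bool) → ℝ := fun x => D * Real.exp (-(H x)) with hgdef
    have hg0 : ∀ x, 0 < g x := fun x => mul_pos hD0 (Real.exp_pos _)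
    -- product formula for f
    have hfac_eq : ∀ x : Fin n → Bool,
        (∑ h : Fin (2 ^ k * T) → Bool, Real.exp ((∑ i, (fun _ => (0:ℝ)) i * bv (x i)) +
          (∑ j, cvec S hcard hterm C M (e j) * bv (h j)) +
          ∑ i, ∑ j, Wmat S hcard M i (e j) * bv (x i) * bv (h j)))
        = ∏ u : Fin T × (Fin k → Bool), fac S hcard hterm C M u x := by
      intro x
      have hexp : ∀ hh : Fin (2 ^ k * T) → Bool,
          ((∑ i, (fun _ => (0:ℝ)) i * bv (x i)) +
            (∑ j, cvec S hcard hterm C M (e j) * bv (hh j)) +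
            ∑ i, ∑ j, Wmat S hcard M i (e j) * bv (x i) * bv (hh j))
          = ∑ j, ((cvec S hcard hterm C M (e j) +
              ∑ i, Wmat S hcard M i (e j) * bv (x i)) * bv (hh j)) := by
        intro hh
        rw [show (∑ i, ∑ j, Wmat S hcard M i (e j) * bv (x i) * bv (hh j))
            = ∑ j, ∑ i, Wmat S hcard M i (e j) * bv (x i) * bv (hh j) from
          Finset.sum_comm]
        simp only [zero_mul, Finset.sum_const_zero, zero_add, add_mul,
          Finset.sum_add_distrib, Finset.sum_mul]
      simp_rw [hexp]
      rw [sum_prod_hidden (2 ^ k * T)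
        (fun j => cvec S hcard hterm C M (e j) + ∑ i, Wmat S hcard M i (e j) * bv (x i))]
      rw [← Equiv.prod_comp e (fun u => fac S hcard hterm C M u x)]
      exact Finset.prod_congr rfl fun j _ => rfl
    -- per-unit bounds
    have hbeta_pos : ∀ (u : Fin T × (Fin k → Bool)) (x : Fin n → Bool),
        0 < beta S hterm C u x := by
      intro u x
      rw [beta]
      split
      · split
        · exact mul_pos (Real.exp_pos _) (Real.exp_pos _)
        · norm_num
      · norm_num
    have hbounds : ∀ (u : Fin T × (Fin k → Bool)) (x : Fin n → Bool),
        beta S hterm C u x ≤ fac S hcard hterm C M u x ∧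
        fac S hcard hterm C M u x ≤ (1 + δ) * beta S hterm C u x := by
      intro u x
      by_cases hz : active S u.1 u.2
      · by_cases hz0 : u.2 = z0 S u.1 x
        · have hmis : mis S hcard u.1 u.2 x = 0 := by
            rw [hz0]; exact mis_z0 S hcard u.1 x
          have hterm_eq : hterm u.1 (xw S hcard u.1 u.2) = hterm u.1 x := by
            apply hdep u.1
            intro i hi
            rw [xw, dif_pos hi]
            exact ((mis_eq_zero_iff S hcard u.1 u.2 x).1 hmis ⟨i, hi⟩).symm
          have hfac : fac S hcard hterm C M u x = C * Real.exp (-(hterm u.1 x)) := by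
            rw [fac, theta_eq, if_pos hz, hmis, mul_zero, sub_zero, tval, hterm_eq,
              Real.exp_log (by linarith [hC1 u.1 x])]
            ring
          have hbeta' : beta S hterm C u x = C * Real.exp (-(hterm u.1 x)) := by
            rw [beta, if_pos hz, if_pos hz0]
          rw [hfac, hbeta']
          have hp : 0 < C * Real.exp (-(hterm u.1 x)) := by positivity
          constructor
          · exact le_refl _
          · nlinarith
        · have hmis : mis S hcard u.1 u.2 x ≠ 0 :=
            fun h => hz0 (eq_z0 S hcard u.1 u.2 x hz h)
          have hmis1 := one_le_mis S hcard u.1 u.2 x hmis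
          have htval : tval S hcard hterm C u.1 u.2 ≤ 2 * K + 1 := by
            have hpos := hC1 u.1 (xw S hcard u.1 u.2)
            have harg : C * Real.exp (-(hterm u.1 (xw S hcard u.1 u.2)))
                = Real.exp (K + 1 + -(hterm u.1 (xw S hcard u.1 u.2))) := by
              rw [hCdef, ← Real.exp_add]
            rw [tval, harg]
            rw [harg] at hpos
            have h2 : Real.log (Real.exp (K + 1 + -(hterm u.1 (xw S hcard u.1 u.2))) - 1)
                ≤ Real.log (Real.exp (K + 1 + -(hterm u.1 (xw S hcard u.1 u.2)))) :=
              Real.log_le_log (by linarith) (by linarith)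
            rw [Real.log_exp] at h2
            have h3 := hKb u.1 (xw S hcard u.1 u.2)
            have h4 := neg_abs_le (hterm u.1 (xw S hcard u.1 u.2))
            linarith
          have hθ : theta S hcard hterm C M u x ≤ Real.log δ := by
            rw [theta_eq, if_pos hz]
            have h5 : M * 1 ≤ M * mis S hcard u.1 u.2 x :=
              mul_le_mul_of_nonneg_left hmis1 hM0
            rw [hMdef] at *
            linarith
          have hexpθ : Real.exp (theta S hcard hterm C M u x) ≤ δ := by
            calc Real.exp (theta S hcard hterm C M u x) ≤ Real.exp (Real.log δ) :=
                Real.exp_le_exp.2 hθ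
              _ = δ := Real.exp_log hδ0
          have hbeta' : beta S hterm C u x = 1 := by
            rw [beta, if_pos hz, if_neg hz0]
          rw [fac, hbeta']
          constructor
          · linarith [Real.exp_pos (theta S hcard hterm C M u x)]
          · linarith
      · have hfac : fac S hcard hterm C M u x = 2 := by
          rw [fac, theta_eq, if_neg hz, Real.exp_zero]
          norm_num
        have hbeta' : beta S hterm C u x = 2 := by rw [beta, if_neg hz]
        rw [hfac, hbeta']
        constructor
        · exact le_refl _
        · linarith
    -- product of beta
    have hgprod : ∀ x, (∏ u : Fin T × (Fin k → Bool), beta S hterm C u x) = g x := by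
      intro x
      rw [Fintype.prod_prod_type (f := fun u => beta S hterm C u x)]
      have : ∀ b : Fin T, (∏ z : Fin k → Bool, beta S hterm C (b, z) x)
          = (C * ∏ _z ∈ Finset.univ.filter
              (fun z : Fin k → Bool => ¬ active S b z), (2 : ℝ)) *
            Real.exp (-(hterm b x)) := by
        intro b
        rw [prod_beta]
        ring
      rw [Finset.prod_congr rfl fun b _ => this b, Finset.prod_mul_distrib,
        ← hDdef, hgdef]
      congr 1
      rw [← Real.exp_sum]
      congr 1
      rw [hHdef]
      simp
    -- bounds on f
    have hlow : ∀ x, g x ≤ ∏ u : Fin T × (Fin k → Bool), fac S hcard hterm C M u x := by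
      intro x
      rw [← hgprod x]
      exact Finset.prod_le_prod (fun u _ => (hbeta_pos u x).le)
        (fun u _ => (hbounds u x).1)
    have hcount : ((1 : ℝ) + δ) ^ (Fintype.card (Fin T × (Fin k → Bool))) ≤ 1 + ε := by
      have hm_le : Fintype.card (Fin T × (Fin k → Bool)) ≤ N := by
        rw [hcardσ, hNdef]
        have : 2 ^ k * T = T * 2 ^ k := Nat.mul_comm _ _
        omega
      have hδN : (N : ℝ) * δ ≤ Real.log (1 + ε) := by
        have h6 : δ ≤ Real.log (1 + ε) / N := min_le_left _ _
        have hN0 : (0 : ℝ) < N := by positivity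
        rw [mul_comm]
        calc δ * N ≤ (Real.log (1 + ε) / N) * N := by gcongr
          _ = Real.log (1 + ε) := by field_simp
      calc ((1 : ℝ) + δ) ^ (Fintype.card (Fin T × (Fin k → Bool)))
          ≤ (1 + δ) ^ N := pow_le_pow_right₀ (by linarith) hm_le
        _ ≤ (Real.exp δ) ^ N :=
            pow_le_pow_left₀ (by linarith) (by linarith [Real.add_one_le_exp δ]) N
        _ = Real.exp ((N : ℝ) * δ) := (Real.exp_nat_mul δ N).symm
        _ ≤ Real.exp (Real.log (1 + ε)) := Real.exp_le_exp.2 hδN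
        _ = 1 + ε := Real.exp_log (by linarith)
    have hupp : ∀ x, (∏ u : Fin T × (Fin k → Bool), fac S hcard hterm C M u x)
        ≤ (1 + ε) * g x := by
      intro x
      have step1 : (∏ u : Fin T × (Fin k → Bool), fac S hcard hterm C M u x)
          ≤ ∏ u : Fin T × (Fin k → Bool), ((1 + δ) * beta S hterm C u x) :=
        Finset.prod_le_prod
          (fun u _ => le_trans (hbeta_pos u x).le (hbounds u x).1)
          (fun u _ => (hbounds u x).2)
      have step2 : (∏ u : Fin T × (Fin k → Bool), ((1 + δ) * beta S hterm C u x))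
          = (1 + δ) ^ (Fintype.card (Fin T × (Fin k → Bool))) *
            ∏ u : Fin T × (Fin k → Bool), beta S hterm C u x := by
        rw [Finset.prod_mul_distrib, Finset.prod_const, Finset.card_univ]
      have step3 : (1 + δ) ^ (Fintype.card (Fin T × (Fin k → Bool))) *
            (∏ u : Fin T × (Fin k → Bool), beta S hterm C u x)
          ≤ (1 + ε) * ∏ u : Fin T × (Fin k → Bool), beta S hterm C u x := by
        apply mul_le_mul_of_nonneg_right hcount
        exact Finset.prod_nonneg fun u _ => (hbeta_pos u x).le
      calc (∏ u : Fin T × (Fin k → Bool), fac S hcard hterm C M u x)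
          ≤ _ := step1
        _ = _ := step2
        _ ≤ (1 + ε) * g x := by rw [hgprod x] at step3 ⊢; exact step3
    -- conclude
    have hFeq : (fun x : Fin n → Bool =>
        ∑ h : Fin (2 ^ k * T) → Bool, Real.exp ((∑ i, (fun _ => (0:ℝ)) i * bv (x i)) +
          (∑ j, cvec S hcard hterm C M (e j) * bv (h j)) +
          ∑ i, ∑ j, Wmat S hcard M i (e j) * bv (x i) * bv (h j)))
        = fun x => ∏ u : Fin T × (Fin k → Bool), fac S hcard hterm C M u x :=
      funext hfac_eq
    have hgibbs : gibbs (fun y => ∑ b, hterm b y) = fun x => g x / ∑ y, g y := by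
      funext x
      rw [hgdef]
      show Real.exp (-(H x)) / (∑ z, Real.exp (-(H z)))
        = D * Real.exp (-(H x)) / ∑ y, D * Real.exp (-(H y))
      rw [← Finset.mul_sum, mul_div_mul_left _ _ hD0.ne']
    rw [hFeq, hgibbs]
    exact tv_aux _ _ ε hε.le hg0 hlow hupp
end

section
/- Let P₁, …, P_T be matrices on n qubits (not necessarily unitary), each P_i being k-local with all entries of its local matrix real and strictly positive. Then P_T⋯P₁|+⟩ ≠ 0, and the state |ψ⟩ = P_T⋯P₁|+⟩ / ‖P_T⋯P₁|+⟩‖₂ is represented exactly in wavefunction by a 2k-local Hyper Boltzmann Machine with n visible nodes, at most kT hidden nodes and T hyperedges in which each node is contained in at most 2 hyperedges; that is, the HBM's output f satisfies f(x)/√(∑_y f(y)²) = ⟨x|ψ⟩ for all x ∈ {0,1}^n. -/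
open scoped BigOperators

namespace StoqPaper12
open StoqPaper

lemma chain_expand {α : Type*} [Fintype α] [DecidableEq α] :
    ∀ (T : ℕ) (Q : Fin T → Matrix α α ℂ) (v : α → ℂ) (x : α),
    ((List.ofFn Q).reverse.prod.mulVec v) x
      = ∑ c : Fin T → α,
          (∏ t, Q t ((Fin.snoc c x : Fin (T+1) → α) t.succ) ((Fin.snoc c x : Fin (T+1) → α) t.castSucc)) * v ((Fin.snoc c x : Fin (T+1) → α) 0) := by
  intro T
  induction T with
  | zero =>
    intro Q v x
    simp only [List.ofFn_zero, List.reverse_nil, List.prod_nil, Matrix.one_mulVec]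
    rw [Finset.sum_eq_single_of_mem (fun _ => x) (Finset.mem_univ _)]
    · simp [Fin.snoc]
    · intro b _ hb; exact absurd (funext fun i => i.elim0) hb
  | succ T ih =>
    intro Q v x
    rw [List.ofFn_succ, List.reverse_cons, List.prod_append, List.prod_cons, List.prod_nil,
      mul_one, ← Matrix.mulVec_mulVec, ih (fun i => Q i.succ) ((Q 0).mulVec v) x]
    rw [← Equiv.sum_comp (Fin.consEquiv (fun _ : Fin (T+1) => α))
      (fun c : Fin (T+1) → α =>
        (∏ t, Q t ((Fin.snoc c x : Fin (T+2) → α) t.succ) ((Fin.snoc c x : Fin (T+2) → α) t.castSucc)) * v ((Fin.snoc c x : Fin (T+2) → α) 0)),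
      Fintype.sum_prod_type]
    rw [Finset.sum_comm]
    refine Finset.sum_congr rfl (fun c _ => ?_)
    have hz : ∀ a : α, (Fin.snoc (Fin.cons a c : Fin (T+1) → α) x : Fin (T+2) → α)
        = Fin.cons a (Fin.snoc c x : Fin (T+1) → α) := fun a => (Fin.cons_snoc_eq_snoc_cons a c x).symm
    simp only [Matrix.mulVec, dotProduct, Finset.mul_sum]
    refine Finset.sum_congr rfl (fun a _ => ?_)
    have hc : (Fin.consEquiv (fun _ : Fin (T+1) => α)) (a, c) = Fin.cons a c := rfl
    rw [hc, hz]
    set d : Fin (T+1) → α := (Fin.snoc c x : Fin (T+1) → α) with hd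
    set e : Fin (T+2) → α := Fin.cons a d with he
    rw [Fin.prod_univ_succ]
    have h1 : e ((0 : Fin (T+1)).succ) = d 0 := by rw [he]; simp
    have h2 : e ((0 : Fin (T+1)).castSucc) = a := by rw [he]; simp
    rw [h1, h2]
    have h3 : ∀ i : Fin T, e (i.succ.succ) = d i.succ := by
      intro i; rw [he]; simp
    have h4 : ∀ i : Fin T, e (i.succ.castSucc) = d i.castSucc := by
      intro i; rw [he, ← Fin.succ_castSucc]; simp
    have h5 : e 0 = a := by rw [he]; simp
    simp only [h3, h4, h5]
    ring



open Finset

variable {n T : ℕ}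

/-- Hidden-node index type. -/
abbrev HT (S : Fin T → Finset (Fin n)) : Type := Σ t : Fin T, {j // j ∈ S t}

/-- Number of hidden nodes. -/
noncomputable def mE (S : Fin T → Finset (Fin n)) : ℕ := Fintype.card (HT S)

noncomputable def eH (S : Fin T → Finset (Fin n)) : HT S ≃ Fin (mE S) := Fintype.equivFin _

/-- Steps with index ≥ s whose support contains j. -/
def stepSet (S : Fin T → Finset (Fin n)) (s : ℕ) (j : Fin n) : Finset (Fin T) :=
  univ.filter (fun t => s ≤ (t : ℕ) ∧ j ∈ S t)

/-- The node carrying the value of bit j just before step s. -/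
noncomputable def recon (S : Fin T → Finset (Fin n)) (s : ℕ) (j : Fin n) :
    Fin n ⊕ Fin (mE S) :=
  if h : (stepSet S s j).Nonempty then
    Sum.inr (eH S ⟨(stepSet S s j).min' h, ⟨j, ((Finset.mem_filter.mp
      ((stepSet S s j).min'_mem h)).2).2⟩⟩)
  else Sum.inl j

/-- The reconstructed configuration before step s. -/
noncomputable def conf (S : Fin T → Finset (Fin n))
    (y : (Fin n ⊕ Fin (mE S)) → Bool) (s : ℕ) : Fin n → Bool :=
  fun j => y (recon S s j)

lemma sigma_mk_eq (S : Fin T → Finset (Fin n)) {t t' : Fin T} (h : t = t') (j : Fin n)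
    (hj : j ∈ S t) (hj' : j ∈ S t') : (⟨t, ⟨j, hj⟩⟩ : HT S) = ⟨t', ⟨j, hj'⟩⟩ := by
  subst h; rfl

lemma min'_stepSet_self (S : Fin T → Finset (Fin n)) (t : Fin T) (j : Fin n)
    (hj : j ∈ S t) (hne : (stepSet S (t : ℕ) j).Nonempty) :
    (stepSet S (t : ℕ) j).min' hne = t := by
  have htm : t ∈ stepSet S (t : ℕ) j := by
    simp [stepSet, hj]
  refine le_antisymm (Finset.min'_le _ _ htm) (Finset.le_min' _ _ _ ?_)
  intro y hy
  have := (Finset.mem_filter.mp hy).2.1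
  exact Fin.le_def.mpr this

lemma recon_mem (S : Fin T → Finset (Fin n)) (t : Fin T) (j : Fin n) (hj : j ∈ S t) :
    recon S (t : ℕ) j = Sum.inr (eH S ⟨t, ⟨j, hj⟩⟩) := by
  have hne : (stepSet S (t : ℕ) j).Nonempty := ⟨t, by simp [stepSet, hj]⟩
  rw [recon, dif_pos hne]
  congr 1
  exact congrArg (eH S) (sigma_mk_eq S (min'_stepSet_self S t j hj hne) j _ hj)

lemma recon_not_mem (S : Fin T → Finset (Fin n)) (t : Fin T) (j : Fin n) (hj : j ∉ S t) :
    recon S ((t : ℕ) + 1) j = recon S (t : ℕ) j := by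
  have hset : stepSet S ((t : ℕ) + 1) j = stepSet S (t : ℕ) j := by
    ext u
    simp only [stepSet, Finset.mem_filter, Finset.mem_univ, true_and]
    constructor
    · rintro ⟨h1, h2⟩; exact ⟨Nat.le_of_succ_le h1, h2⟩
    · rintro ⟨h1, h2⟩
      refine ⟨?_, h2⟩
      rcases Nat.lt_or_ge (t : ℕ) (u : ℕ) with h | h
      · exact h
      · exact absurd h2 (by
          have : (u : ℕ) = (t : ℕ) := le_antisymm h h1
          have : u = t := Fin.ext this
          rw [this]; exact hj)
  have minc : ∀ (A B : Finset (Fin T)) (h : A = B) (hA : A.Nonempty) (hB : B.Nonempty),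
      A.min' hA = B.min' hB := by rintro A B rfl _ _; rfl
  rw [recon, recon]
  by_cases hne : (stepSet S ((t : ℕ) + 1) j).Nonempty
  · have hne' : (stepSet S (t : ℕ) j).Nonempty := hset ▸ hne
    rw [dif_pos hne, dif_pos hne']
    exact congrArg Sum.inr (congrArg (eH S) (sigma_mk_eq S (minc _ _ hset hne hne') j _ _))
  · have hne' : ¬ (stepSet S (t : ℕ) j).Nonempty := hset ▸ hne
    rw [dif_neg hne, dif_neg hne']

lemma recon_top (S : Fin T → Finset (Fin n)) (j : Fin n) :
    recon S T j = Sum.inl j := by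
  have : stepSet S T j = ∅ := by
    ext u
    simp only [stepSet, Finset.mem_filter, Finset.mem_univ, true_and, Finset.notMem_empty,
      iff_false]
    rintro ⟨h1, _⟩
    exact absurd h1 (Nat.not_le.mpr u.isLt)
  rw [recon, dif_neg (by simp [this])]

/-- ℕ-indexed extension of a chain by the final configuration. -/
def ecf (c : Fin T → (Fin n → Bool)) (x : Fin n → Bool) (s : ℕ) : Fin n → Bool :=
  if hs : s < T then c ⟨s, hs⟩ else x

lemma snoc_eq (c : Fin T → (Fin n → Bool)) (x : Fin n → Bool) (i : Fin (T + 1)) :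
    (Fin.snoc c x : Fin (T + 1) → (Fin n → Bool)) i = ecf c x (i : ℕ) := by
  induction i using Fin.lastCases with
  | last => rw [Fin.snoc_last, Fin.val_last, ecf, dif_neg (lt_irrefl T)]
  | cast i => rw [Fin.snoc_castSucc, Fin.coe_castSucc, ecf, dif_pos i.isLt, Fin.eta]

lemma travel (S : Fin T → Finset (Fin n)) (c : Fin T → (Fin n → Bool)) (x : Fin n → Bool)
    (j : Fin n)
    (hstep : ∀ u : Fin T, j ∉ S u → ecf c x ((u : ℕ) + 1) j = ecf c x (u : ℕ) j) :
    ∀ s t : ℕ, t ≤ s → (∀ u : Fin T, t ≤ (u : ℕ) → (u : ℕ) < s → j ∉ S u) →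
      ecf c x t j = ecf c x s j := by
  intro s
  induction s with
  | zero => intro t ht _; rw [Nat.le_zero.mp ht]
  | succ s ih =>
    intro t ht hgap
    rcases Nat.lt_or_ge t (s + 1) with hlt | hge
    · have hts : t ≤ s := Nat.lt_succ_iff.mp hlt
      have h1 : ecf c x t j = ecf c x s j :=
        ih t hts (fun u hu hu' => hgap u hu (Nat.lt_succ_of_lt hu'))
      rcases Nat.lt_or_ge s T with hsT | hsT
      · have h2 := hstep ⟨s, hsT⟩ (hgap ⟨s, hsT⟩ hts (Nat.lt_succ_self s))
        rw [h1, ← h2]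
      · have h2 : ecf c x s j = x j := by rw [ecf, dif_neg (Nat.not_lt.mpr hsT)]
        have h3 : ecf c x (s + 1) j = x j := by
          rw [ecf, dif_neg (Nat.not_lt.mpr (Nat.le_succ_of_le hsT))]
        rw [h1, h2, h3]
    · have : t = s + 1 := le_antisymm ht hge
      rw [this]

lemma sum_hidden_eq (S : Fin T → Finset (Fin n))
    (Pm : Fin T → Matrix (Fin n → Bool) (Fin n → Bool) ℂ)
    (hloc : ∀ t, LocalOn (S t) (Pm t)) (x : Fin n → Bool) :
    ∑ h : Fin (mE S) → Bool, ∏ t : Fin T,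
        Pm t (conf S (Sum.elim x h) ((t : ℕ) + 1)) (conf S (Sum.elim x h) (t : ℕ))
      = ∑ c : Fin T → (Fin n → Bool), ∏ t : Fin T,
          Pm t ((Fin.snoc c x : Fin (T + 1) → (Fin n → Bool)) t.succ)
            ((Fin.snoc c x : Fin (T + 1) → (Fin n → Bool)) t.castSucc) := by
  classical
  set φ : (Fin (mE S) → Bool) → (Fin T → (Fin n → Bool)) :=
    fun h t => conf S (Sum.elim x h) (t : ℕ) with hφ
  have snoc_phi : ∀ (h : Fin (mE S) → Bool) (s : Fin (T + 1)),
      (Fin.snoc (φ h) x : Fin (T + 1) → (Fin n → Bool)) s = conf S (Sum.elim x h) (s : ℕ) := by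
    intro h s
    induction s using Fin.lastCases with
    | last =>
      rw [Fin.snoc_last, Fin.val_last]
      funext j
      rw [conf, recon_top]
      rfl
    | cast i => rw [Fin.snoc_castSucc, Fin.coe_castSucc]
  have hinj : Function.Injective φ := by
    intro h1 h2 he
    funext a
    have hp : (⟨((eH S).symm a).1, ⟨((eH S).symm a).2.val, ((eH S).symm a).2.2⟩⟩ : HT S)
        = (eH S).symm a := by
      rcases (eH S).symm a with ⟨t, ⟨j, hj⟩⟩; rfl
    have hr : recon S (((eH S).symm a).1 : ℕ) ((eH S).symm a).2.val = Sum.inr a := by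
      rw [recon_mem S _ _ ((eH S).symm a).2.2, hp, Equiv.apply_symm_apply]
    have e1 : h1 a = φ h1 ((eH S).symm a).1 ((eH S).symm a).2.val := by
      rw [hφ]; show h1 a = conf S (Sum.elim x h1) _ _; rw [conf, hr]; rfl
    have e2 : h2 a = φ h2 ((eH S).symm a).1 ((eH S).symm a).2.val := by
      rw [hφ]; show h2 a = conf S (Sum.elim x h2) _ _; rw [conf, hr]; rfl
    rw [e1, e2, he]
  have step1 : ∀ h : Fin (mE S) → Bool,
      (∏ t : Fin T, Pm t (conf S (Sum.elim x h) ((t : ℕ) + 1)) (conf S (Sum.elim x h) (t : ℕ)))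
        = ∏ t : Fin T, Pm t ((Fin.snoc (φ h) x : Fin (T + 1) → (Fin n → Bool)) t.succ)
            ((Fin.snoc (φ h) x : Fin (T + 1) → (Fin n → Bool)) t.castSucc) := by
    intro h
    refine Finset.prod_congr rfl (fun t _ => ?_)
    rw [snoc_phi h t.succ, snoc_phi h t.castSucc, Fin.val_succ, Fin.coe_castSucc]
  set G : (Fin T → Fin n → Bool) → ℂ := fun c => ∏ t : Fin T,
    Pm t ((Fin.snoc c x : Fin (T + 1) → (Fin n → Bool)) t.succ)
      ((Fin.snoc c x : Fin (T + 1) → (Fin n → Bool)) t.castSucc) with hG0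
  simp only [step1]
  have himg : ∑ c ∈ Finset.univ.image φ, G c = ∑ h : Fin (mE S) → Bool, G (φ h) :=
    Finset.sum_image (fun h _ h' _ e => hinj e)
  rw [show (∑ h : Fin (mE S) → Bool, ∏ t : Fin T,
      Pm t ((Fin.snoc (φ h) x : Fin (T + 1) → (Fin n → Bool)) t.succ)
        ((Fin.snoc (φ h) x : Fin (T + 1) → (Fin n → Bool)) t.castSucc))
      = ∑ h : Fin (mE S) → Bool, G (φ h) from rfl, ← himg]
  show ∑ c ∈ Finset.univ.image φ, G c = ∑ c : Fin T → Fin n → Bool, G c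
  refine Finset.sum_subset (Finset.subset_univ _) ?_
  intro c _ hc
  by_contra hG
  apply hc
  have hfac : ∀ t : Fin T,
      Pm t ((Fin.snoc c x : Fin (T + 1) → (Fin n → Bool)) t.succ)
        ((Fin.snoc c x : Fin (T + 1) → (Fin n → Bool)) t.castSucc) ≠ 0 := by
    intro t
    exact Finset.prod_ne_zero_iff.mp hG t (Finset.mem_univ t)
  have hagree : ∀ (t : Fin T) (j : Fin n), j ∉ S t →
      ecf c x ((t : ℕ) + 1) j = ecf c x (t : ℕ) j := by
    intro t j hj
    by_contra hne
    apply hfac t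
    apply (hloc t).1
    refine ⟨j, hj, ?_⟩
    rw [snoc_eq, snoc_eq, Fin.val_succ, Fin.coe_castSucc]
    exact hne
  set h : Fin (mE S) → Bool :=
    fun a => ecf c x ((((eH S).symm a).1 : Fin T) : ℕ) (((eH S).symm a).2.val) with hh
  have hφh : φ h = c := by
    funext t j
    show conf S (Sum.elim x h) (t : ℕ) j = c t j
    have hctj : ecf c x (t : ℕ) j = c t j := by rw [ecf, dif_pos t.isLt, Fin.eta]
    rw [conf]
    by_cases hne2 : (stepSet S (t : ℕ) j).Nonempty
    · rw [recon, dif_pos hne2]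
      have hmem := Finset.mem_filter.mp ((stepSet S (t : ℕ) j).min'_mem hne2)
      show h (eH S ⟨(stepSet S (t : ℕ) j).min' hne2, ⟨j, hmem.2.2⟩⟩) = c t j
      rw [hh]
      have hsy : (eH S).symm ((eH S) ⟨(stepSet S (t : ℕ) j).min' hne2, ⟨j, hmem.2.2⟩⟩)
          = ⟨(stepSet S (t : ℕ) j).min' hne2, ⟨j, hmem.2.2⟩⟩ := Equiv.symm_apply_apply _ _
      show ecf c x ((((eH S).symm ((eH S) ⟨(stepSet S (t : ℕ) j).min' hne2,
          ⟨j, hmem.2.2⟩⟩)).1 : Fin T) : ℕ)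
        (((eH S).symm ((eH S) ⟨(stepSet S (t : ℕ) j).min' hne2, ⟨j, hmem.2.2⟩⟩)).2.val) = c t j
      rw [hsy]
      have hgap : ∀ u : Fin T, (t : ℕ) ≤ (u : ℕ) →
          (u : ℕ) < (((stepSet S (t : ℕ) j).min' hne2 : Fin T) : ℕ) → j ∉ S u := by
        intro u hu hu' hju
        have humem : u ∈ stepSet S (t : ℕ) j :=
          Finset.mem_filter.mpr ⟨Finset.mem_univ u, hu, hju⟩
        exact absurd (Fin.le_def.mp (Finset.min'_le _ u humem)) (Nat.not_le.mpr hu')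
      have htr := travel S c x j (fun u hu => hagree u j hu)
        (((stepSet S (t : ℕ) j).min' hne2 : Fin T) : ℕ) (t : ℕ) hmem.2.1 hgap
      rw [← htr, hctj]
    · rw [recon, dif_neg hne2]
      show x j = c t j
      have hgap : ∀ u : Fin T, (t : ℕ) ≤ (u : ℕ) → (u : ℕ) < T → j ∉ S u := by
        intro u hu _ hju
        exact hne2 ⟨u, Finset.mem_filter.mpr ⟨Finset.mem_univ u, hu, hju⟩⟩
      have htr := travel S c x j (fun u hu => hagree u j hu) T (t : ℕ) (le_of_lt t.isLt) hgap
      have hTx : ecf c x T j = x j := by rw [ecf, dif_neg (lt_irrefl T)]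
      rw [← hctj, htr, hTx]
  exact Finset.mem_image.mpr ⟨h, Finset.mem_univ h, hφh⟩

/-- The hyperedge of step t. -/
noncomputable def edgeS (S : Fin T → Finset (Fin n)) (t : Fin T) :
    Finset (Fin n ⊕ Fin (mE S)) :=
  (S t).image (fun j => recon S (t : ℕ) j) ∪ (S t).image (fun j => recon S ((t : ℕ) + 1) j)

/-- The local energy of step t. -/
noncomputable def FS (S : Fin T → Finset (Fin n))
    (Pm : Fin T → Matrix (Fin n → Bool) (Fin n → Bool) ℂ) (t : Fin T)
    (y : (Fin n ⊕ Fin (mE S)) → Bool) : ℝ :=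
  - Real.log ((Pm t (conf S y ((t : ℕ) + 1)) (conf S y (t : ℕ))).re)

lemma entry_eq_of_agree (S : Fin T → Finset (Fin n))
    (Pm : Fin T → Matrix (Fin n → Bool) (Fin n → Bool) ℂ) (t : Fin T)
    (hloc : LocalOn (S t) (Pm t)) (y y' : (Fin n ⊕ Fin (mE S)) → Bool)
    (hyy' : ∀ v ∈ edgeS S t, y v = y' v) :
    Pm t (conf S y ((t : ℕ) + 1)) (conf S y (t : ℕ))
      = Pm t (conf S y' ((t : ℕ) + 1)) (conf S y' (t : ℕ)) := by
  refine hloc.2 _ _ _ _ ?_ ?_ ?_ ?_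
  · intro i hi
    have : recon S ((t : ℕ) + 1) i ∈ edgeS S t :=
      Finset.mem_union_right _ (Finset.mem_image_of_mem _ hi)
    exact hyy' _ this
  · intro i hi
    have : recon S (t : ℕ) i ∈ edgeS S t :=
      Finset.mem_union_left _ (Finset.mem_image_of_mem _ hi)
    exact hyy' _ this
  · intro i hi
    show y (recon S ((t : ℕ) + 1) i) = y (recon S (t : ℕ) i)
    rw [recon_not_mem S t i hi]
  · intro i hi
    show y' (recon S ((t : ℕ) + 1) i) = y' (recon S (t : ℕ) i)
    rw [recon_not_mem S t i hi]

lemma FS_local (S : Fin T → Finset (Fin n))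
    (Pm : Fin T → Matrix (Fin n → Bool) (Fin n → Bool) ℂ)
    (hloc : ∀ t, LocalOn (S t) (Pm t)) (t : Fin T) :
    DependsOnlyOn (edgeS S t) (FS S Pm t) := by
  intro y y' hyy'
  rw [FS, FS, entry_eq_of_agree S Pm t (hloc t) y y' hyy']

lemma entry_pos (S : Fin T → Finset (Fin n))
    (Pm : Fin T → Matrix (Fin n → Bool) (Fin n → Bool) ℂ) (t : Fin T)
    (hpos : ∀ x y : Fin n → Bool, (∀ i, i ∉ S t → x i = y i) →
      (Pm t x y).im = 0 ∧ 0 < (Pm t x y).re)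
    (y : (Fin n ⊕ Fin (mE S)) → Bool) :
    (Pm t (conf S y ((t : ℕ) + 1)) (conf S y (t : ℕ))).im = 0 ∧
      0 < (Pm t (conf S y ((t : ℕ) + 1)) (conf S y (t : ℕ))).re := by
  refine hpos _ _ ?_
  intro i hi
  show y (recon S ((t : ℕ) + 1) i) = y (recon S (t : ℕ) i)
  rw [recon_not_mem S t i hi]

lemma exp_neg_FS (S : Fin T → Finset (Fin n))
    (Pm : Fin T → Matrix (Fin n → Bool) (Fin n → Bool) ℂ) (t : Fin T)
    (hpos : ∀ x y : Fin n → Bool, (∀ i, i ∉ S t → x i = y i) →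
      (Pm t x y).im = 0 ∧ 0 < (Pm t x y).re)
    (y : (Fin n ⊕ Fin (mE S)) → Bool) :
    Real.exp (-(FS S Pm t y)) = (Pm t (conf S y ((t : ℕ) + 1)) (conf S y (t : ℕ))).re := by
  rw [FS, neg_neg, Real.exp_log (entry_pos S Pm t hpos y).2]

lemma f2_unique (S : Fin T → Finset (Fin n)) (v : Fin n ⊕ Fin (mE S)) (t t' : Fin T)
    (h1 : ∃ j ∈ S t, recon S ((t : ℕ) + 1) j = v)
    (h2 : ∃ j ∈ S t', recon S ((t' : ℕ) + 1) j = v)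
    (hlt : (t : ℕ) < (t' : ℕ)) : False := by
  obtain ⟨j, hj, hr⟩ := h1
  obtain ⟨j', hj', hr'⟩ := h2
  cases v with
  | inl j₀ =>
    rw [recon] at hr hr'
    by_cases hne : (stepSet S ((t : ℕ) + 1) j).Nonempty
    · rw [dif_pos hne] at hr; exact nomatch hr
    · rw [dif_neg hne] at hr
      have hjj : j = j₀ := Sum.inl.inj hr
      have hj'' : j' = j₀ := by
        by_cases hne' : (stepSet S ((t' : ℕ) + 1) j').Nonempty
        · rw [dif_pos hne'] at hr'; exact nomatch hr'
        · rw [dif_neg hne'] at hr'; exact Sum.inl.inj hr'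
      apply hne
      refine ⟨t', Finset.mem_filter.mpr ⟨Finset.mem_univ _, hlt, ?_⟩⟩
      rw [hjj]; rw [hj''] at hj'; exact hj'
  | inr a =>
    rw [recon] at hr hr'
    by_cases hne : (stepSet S ((t : ℕ) + 1) j).Nonempty
    · by_cases hne' : (stepSet S ((t' : ℕ) + 1) j').Nonempty
      · rw [dif_pos hne] at hr
        rw [dif_pos hne'] at hr'
        have hsig := (eH S).injective ((Sum.inr.inj hr).trans (Sum.inr.inj hr').symm)
        have hjeq : j = j' := congrArg (fun p : HT S => (p.2 : Fin n)) hsig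
        have hfeq : (stepSet S ((t : ℕ) + 1) j).min' hne
            = (stepSet S ((t' : ℕ) + 1) j').min' hne' := congrArg Sigma.fst hsig
        -- the common minimum s₀
        have hm2 := Finset.mem_filter.mp ((stepSet S ((t' : ℕ) + 1) j').min'_mem hne')
        have ht'mem : t' ∈ stepSet S ((t : ℕ) + 1) j := by
          refine Finset.mem_filter.mpr ⟨Finset.mem_univ _, hlt, ?_⟩
          rw [hjeq]; exact hj'
        have hle := Fin.le_def.mp (Finset.min'_le _ _ ht'mem)
        rw [hfeq] at hle
        exact absurd hm2.2.1 (Nat.not_le.mpr (Nat.lt_succ_of_le hle))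
      · rw [dif_neg hne'] at hr'; exact nomatch hr'
    · rw [dif_neg hne] at hr; exact nomatch hr

lemma f1_unique (S : Fin T → Finset (Fin n)) (v : Fin n ⊕ Fin (mE S)) (t t' : Fin T)
    (h1 : ∃ j ∈ S t, recon S (t : ℕ) j = v)
    (h2 : ∃ j ∈ S t', recon S (t' : ℕ) j = v) : t = t' := by
  obtain ⟨j, hj, hr⟩ := h1
  obtain ⟨j', hj', hr'⟩ := h2
  rw [recon_mem S t j hj] at hr
  rw [recon_mem S t' j' hj'] at hr'
  cases v with
  | inl j₀ => exact nomatch hr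
  | inr a =>
    have hsig := (eH S).injective ((Sum.inr.inj hr).trans (Sum.inr.inj hr').symm)
    exact congrArg Sigma.fst hsig

lemma deg_le_two (S : Fin T → Finset (Fin n)) (v : Fin n ⊕ Fin (mE S)) :
    (Finset.univ.filter (fun t => v ∈ edgeS S t)).card ≤ 2 := by
  classical
  set f1 := Finset.univ.filter
    (fun t : Fin T => v ∈ (S t).image (fun j => recon S (t : ℕ) j)) with hf1
  set f2 := Finset.univ.filter
    (fun t : Fin T => v ∈ (S t).image (fun j => recon S ((t : ℕ) + 1) j)) with hf2
  have hsub : Finset.univ.filter (fun t => v ∈ edgeS S t) ⊆ f1 ∪ f2 := by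
    intro t ht
    have := (Finset.mem_filter.mp ht).2
    rcases Finset.mem_union.mp this with h | h
    · exact Finset.mem_union_left _ (Finset.mem_filter.mpr ⟨Finset.mem_univ _, h⟩)
    · exact Finset.mem_union_right _ (Finset.mem_filter.mpr ⟨Finset.mem_univ _, h⟩)
  have hc1 : f1.card ≤ 1 := by
    rw [Finset.card_le_one]
    intro a ha b hb
    have ha' := (Finset.mem_filter.mp ha).2
    have hb' := (Finset.mem_filter.mp hb).2
    obtain ⟨j, hj, hr⟩ := Finset.mem_image.mp ha'
    obtain ⟨j', hj', hr'⟩ := Finset.mem_image.mp hb'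
    exact f1_unique S v a b ⟨j, hj, hr⟩ ⟨j', hj', hr'⟩
  have hc2 : f2.card ≤ 1 := by
    rw [Finset.card_le_one]
    intro a ha b hb
    have ha' := (Finset.mem_filter.mp ha).2
    have hb' := (Finset.mem_filter.mp hb).2
    obtain ⟨j, hj, hr⟩ := Finset.mem_image.mp ha'
    obtain ⟨j', hj', hr'⟩ := Finset.mem_image.mp hb'
    by_contra hne
    rcases Nat.lt_or_ge (a : ℕ) (b : ℕ) with h | h
    · exact f2_unique S v a b ⟨j, hj, hr⟩ ⟨j', hj', hr'⟩ h
    · rcases Nat.lt_or_ge (b : ℕ) (a : ℕ) with h' | h'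
      · exact f2_unique S v b a ⟨j', hj', hr'⟩ ⟨j, hj, hr⟩ h'
      · exact hne (Fin.ext (le_antisymm h' h))
  calc (Finset.univ.filter (fun t => v ∈ edgeS S t)).card
      ≤ (f1 ∪ f2).card := Finset.card_le_card hsub
    _ ≤ f1.card + f2.card := Finset.card_union_le _ _
    _ ≤ 1 + 1 := Nat.add_le_add hc1 hc2
    _ = 2 := rfl

end StoqPaper12

open StoqPaper
theorem statement_12 (n k T : ℕ)
    (Pm : Fin T → Matrix ((Fin n) → Bool) ((Fin n) → Bool) ℂ)
    (hP : ∀ i, KLocalPositive k (Pm i)) :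
    ∀ w : ((Fin n) → Bool) → ℂ,
      w = ((List.ofFn Pm).reverse.prod).mulVec (plusState (Fin n)) →
      w ≠ 0 ∧
      ∃ (m : ℕ) (M : HBM n m T), m ≤ k * T ∧ M.IsKLocal (2 * k) ∧
        (∀ v, M.deg v ≤ 2) ∧
        ∀ x, ((M.output x / Real.sqrt (∑ y, (M.output y) ^ 2) : ℝ) : ℂ) =
          ((l2norm w : ℝ) : ℂ)⁻¹ * w x := by
  classical
  intro w hw
  choose S hcard hloc hpos using hP
  set r : ℝ := Real.sqrt (2 ^ n) with hr0
  have hrpos : 0 < r := Real.sqrt_pos.mpr (by positivity)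
  set M : HBM n (StoqPaper12.mE S) T :=
    ⟨StoqPaper12.edgeS S, StoqPaper12.FS S Pm, StoqPaper12.FS_local S Pm hloc⟩ with hM
  -- output is positive
  have houtpos : ∀ x, 0 < M.output x := by
    intro x
    refine Finset.sum_pos (fun h _ => Real.exp_pos _) Finset.univ_nonempty
  -- output formula
  have hterm : ∀ (y : (Fin n ⊕ Fin (StoqPaper12.mE S)) → Bool),
      Real.exp (-(∑ t : Fin T, StoqPaper12.FS S Pm t y))
        = ∏ t : Fin T, (Pm t (StoqPaper12.conf S y ((t : ℕ) + 1))
            (StoqPaper12.conf S y (t : ℕ))).re := by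
    intro y
    rw [show -(∑ t : Fin T, StoqPaper12.FS S Pm t y)
        = ∑ t : Fin T, -(StoqPaper12.FS S Pm t y) by rw [← Finset.sum_neg_distrib],
      Real.exp_sum]
    exact Finset.prod_congr rfl (fun t _ => StoqPaper12.exp_neg_FS S Pm t (hpos t) y)
  have hcast : ∀ x, ((M.output x : ℝ) : ℂ)
      = ∑ h : Fin (StoqPaper12.mE S) → Bool, ∏ t : Fin T,
          Pm t (StoqPaper12.conf S (Sum.elim x h) ((t : ℕ) + 1))
            (StoqPaper12.conf S (Sum.elim x h) (t : ℕ)) := by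
    intro x
    have : M.output x = ∑ h : Fin (StoqPaper12.mE S) → Bool, ∏ t : Fin T,
        (Pm t (StoqPaper12.conf S (Sum.elim x h) ((t : ℕ) + 1))
          (StoqPaper12.conf S (Sum.elim x h) (t : ℕ))).re := by
      rw [HBM.output]
      exact Finset.sum_congr rfl (fun h _ => hterm (Sum.elim x h))
    rw [this, Complex.ofReal_sum]
    refine Finset.sum_congr rfl (fun h _ => ?_)
    rw [Complex.ofReal_prod]
    refine Finset.prod_congr rfl (fun t _ => ?_)
    have him := (StoqPaper12.entry_pos S Pm t (hpos t) (Sum.elim x h)).1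
    exact Complex.ext (Complex.ofReal_re _) (by rw [him, Complex.ofReal_im])
  -- w in terms of output
  have hwx : ∀ x, w x = ((M.output x * r⁻¹ : ℝ) : ℂ) := by
    intro x
    rw [hw]
    rw [StoqPaper12.chain_expand T Pm (plusState (Fin n)) x]
    have hplus : ∀ z : Fin n → Bool, plusState (Fin n) z = ((r⁻¹ : ℝ) : ℂ) := by
      intro z
      rw [plusState, hr0]
      norm_num [Fintype.card_fin]
    simp only [hplus]
    rw [← Finset.sum_mul, ← StoqPaper12.sum_hidden_eq S Pm hloc x, ← hcast x]
    push_cast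
    ring
  have hwne : ∀ x, w x ≠ 0 := by
    intro x
    rw [hwx x]
    rw [Ne, Complex.ofReal_eq_zero]
    exact ne_of_gt (mul_pos (houtpos x) (inv_pos.mpr hrpos))
  refine ⟨?_, ?_⟩
  · intro h0
    exact hwne (fun _ => false) (by rw [h0]; rfl)
  · refine ⟨StoqPaper12.mE S, M, ?_, ?_, ?_, ?_⟩
    · -- m ≤ k * T
      have h1 : StoqPaper12.mE S = ∑ t : Fin T, (S t).card := by
        rw [StoqPaper12.mE, Fintype.card_sigma]
        exact Finset.sum_congr rfl (fun t _ => Fintype.card_coe _)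
      rw [h1]
      calc ∑ t : Fin T, (S t).card ≤ ∑ _t : Fin T, k :=
            Finset.sum_le_sum (fun t _ => hcard t)
        _ = T * k := by rw [Finset.sum_const, Finset.card_univ, Fintype.card_fin, smul_eq_mul]
        _ = k * T := Nat.mul_comm T k
    · -- 2k-local
      intro t
      show (StoqPaper12.edgeS S t).card ≤ 2 * k
      calc (StoqPaper12.edgeS S t).card
          ≤ ((S t).image (fun j => StoqPaper12.recon S (t : ℕ) j)).card
            + ((S t).image (fun j => StoqPaper12.recon S ((t : ℕ) + 1) j)).card :=
            Finset.card_union_le _ _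
        _ ≤ (S t).card + (S t).card :=
            Nat.add_le_add (Finset.card_image_le) (Finset.card_image_le)
        _ ≤ k + k := Nat.add_le_add (hcard t) (hcard t)
        _ = 2 * k := (Nat.two_mul k).symm
    · -- degree ≤ 2
      intro v
      show (Finset.univ.filter (fun t => v ∈ StoqPaper12.edgeS S t)).card ≤ 2
      exact StoqPaper12.deg_le_two S v
    · -- wavefunction equality
      intro x
      set Ssum : ℝ := ∑ y, (M.output y) ^ 2 with hSsum
      have hSpos : 0 < Ssum := by
        refine Finset.sum_pos (fun y _ => ?_) Finset.univ_nonempty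
        exact pow_pos (houtpos y) 2
      have hsq : 0 < Real.sqrt Ssum := Real.sqrt_pos.mpr hSpos
      have hl2 : l2norm w = Real.sqrt Ssum * r⁻¹ := by
        rw [l2norm]
        have : ∀ y, Complex.normSq (w y) = (M.output y) ^ 2 * (r⁻¹) ^ 2 := by
          intro y
          rw [hwx y, Complex.normSq_ofReal]
          ring
        simp only [this]
        rw [← Finset.sum_mul, Real.sqrt_mul (le_of_lt hSpos), Real.sqrt_sq (by positivity)]
      rw [hl2, hwx x]
      have hreal : M.output x / Real.sqrt Ssum
          = (Real.sqrt Ssum * r⁻¹)⁻¹ * (M.output x * r⁻¹) := by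
        field_simp
      rw [hreal]
      push_cast
      ring
end

section
/- Let M be a k-local Hyper Boltzmann Machine with n visible nodes, m hidden nodes and T hyperedges, each node contained in at most k' hyperedges, with all local energies F_e real-valued (hence finite). Then for every ε > 0 there exists a Deep Boltzmann Machine with n visible nodes, at most 2^k·T hidden nodes in the middle layer, m hidden nodes in the deep layer, and every node having at most k'·2^k connections, whose distribution is within total variation distance ε of the distribution of M. -/
open scoped BigOperators

namespace Stoq14
open StoqPaper Finset Filter
open scoped Classical Topology

/-- sum over boolean functions of a product equals product of two-term sums -/
lemma sum_prod_bool {J : Type*} [Fintype J] [DecidableEq J] (f : J → Bool → ℝ) :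
    ∑ h : J → Bool, ∏ j, f j (h j) = ∏ j, (f j false + f j true) := by
  calc ∑ h : J → Bool, ∏ j, f j (h j) = ∏ j, ∑ b : Bool, f j b :=
        (Fintype.prod_sum (fun j (b : Bool) => f j b)).symm
    _ = _ := Finset.prod_congr rfl fun j _ => by simp [add_comm]

noncomputable section

variable {n m T k : ℕ}

/-- equivalence between unit indices and (assignment, hyperedge) pairs -/
def unitEquiv (k T : ℕ) : Fin (2 ^ k * T) ≃ (Fin k → Bool) × Fin T :=
  finProdFinEquiv.symm.trans
    (Equiv.prodCongr (finFunctionFinEquiv.symm.trans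
      (Equiv.arrowCongr (Equiv.refl _) finTwoEquiv)) (Equiv.refl _))

variable (M : HBM n m T)

/-- the configuration of all nodes extending assignment `s` of edge `t` -/
def extCfg (hk : M.IsKLocal k) (t : Fin T) (s : Fin k → Bool) :
    (Fin n ⊕ Fin m) → Bool :=
  fun v => if hv : v ∈ M.edge t then
    s (Fin.castLE (hk t) ((M.edge t).equivFin ⟨v, hv⟩)) else false

/-- the canonical assignment of edge `t` extracted from configuration `y` -/
def canon (k : ℕ) (t : Fin T) (y : (Fin n ⊕ Fin m) → Bool) : Fin k → Bool :=
  fun j => if hj : (j : ℕ) < (M.edge t).card then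
    y (((M.edge t).equivFin.symm ⟨j, hj⟩ : (M.edge t : Finset _)) : Fin n ⊕ Fin m) else false

/-- an assignment is canonical if it vanishes beyond the card of the edge -/
def Canon (k : ℕ) (t : Fin T) (s : Fin k → Bool) : Prop :=
  ∀ j : Fin k, (M.edge t).card ≤ (j : ℕ) → s j = false

lemma canon_isCanon (t : Fin T) (y : (Fin n ⊕ Fin m) → Bool) :
    Canon M k t (canon M k t y) := by
  intro j hj
  rw [canon, dif_neg (by omega)]

lemma extCfg_canon (hk : M.IsKLocal k) (t : Fin T) (y : (Fin n ⊕ Fin m) → Bool)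
    {v} (hv : v ∈ M.edge t) : extCfg M hk t (canon M k t y) v = y v := by
  rw [extCfg, dif_pos hv, canon]
  have hlt : ((Fin.castLE (hk t) ((M.edge t).equivFin ⟨v, hv⟩)) : ℕ) < (M.edge t).card :=
    ((M.edge t).equivFin ⟨v, hv⟩).2
  rw [dif_pos hlt]
  congr 1
  have : (⟨((Fin.castLE (hk t) ((M.edge t).equivFin ⟨v, hv⟩)) : ℕ), hlt⟩ :
      Fin (M.edge t).card) = (M.edge t).equivFin ⟨v, hv⟩ := by
    ext; rfl
  rw [this, Equiv.symm_apply_apply]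

/-- uniqueness: a canonical assignment matching `y` on edge `t` equals `canon t y`. -/
lemma canon_unique (hk : M.IsKLocal k) (t : Fin T) (s : Fin k → Bool)
    (y : (Fin n ⊕ Fin m) → Bool) (hc : Canon M k t s)
    (hm : ∀ v (hv : v ∈ M.edge t), extCfg M hk t s v = y v) : s = canon M k t y := by
  funext j
  by_cases hj : (j : ℕ) < (M.edge t).card
  · set v := ((M.edge t).equivFin.symm ⟨j, hj⟩ : (M.edge t : Finset _)) with hvdef
    have hv : (v : Fin n ⊕ Fin m) ∈ M.edge t := v.2
    have h1 : extCfg M hk t s (v : Fin n ⊕ Fin m) = s j := by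
      rw [extCfg, dif_pos hv]
      congr 1
      have : (⟨(v : Fin n ⊕ Fin m), hv⟩ : (M.edge t : Finset _)) = v := by
        ext; rfl
      rw [this, hvdef, Equiv.apply_symm_apply]
      ext; rfl
    rw [canon, dif_pos hj, ← hm _ hv, h1]
  · rw [hc j (by omega), canon, dif_neg hj]

/-- shifted negated local energy, guaranteed `≥ 1` -/
def G (t : Fin T) (y : (Fin n ⊕ Fin m) → Bool) : ℝ :=
  (Finset.univ.sup' (Finset.univ_nonempty) (M.F t)) + 1 - M.F t y

lemma one_le_G (t : Fin T) (y : (Fin n ⊕ Fin m) → Bool) : 1 ≤ G M t y := by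
  have := Finset.le_sup' (M.F t) (Finset.mem_univ y)
  simp only [G]; linarith

lemma expG_sub_one_pos (t : Fin T) (y : (Fin n ⊕ Fin m) → Bool) :
    0 < Real.exp (G M t y) - 1 := by
  have h1 := one_le_G M t y
  have : (1:ℝ) < Real.exp (G M t y) := by
    calc (1:ℝ) < Real.exp 1 := by
          have := Real.exp_one_gt_d9; linarith
      _ ≤ Real.exp (G M t y) := Real.exp_le_exp.2 h1
  linarith

lemma G_canon (hk : M.IsKLocal k) (t : Fin T) (y : (Fin n ⊕ Fin m) → Bool) :
    G M t (extCfg M hk t (canon M k t y)) = G M t y := by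
  unfold G
  have : M.F t (extCfg M hk t (canon M k t y)) = M.F t y :=
    M.F_local t _ _ (fun v hv => extCfg_canon M hk t y hv)
  rw [this]

/-- bias constant of an active unit -/
def cts (hk : M.IsKLocal k) (t : Fin T) (s : Fin k → Bool) : ℝ :=
  Real.log (Real.exp (G M t (extCfg M hk t s)) - 1)

/-- number of `true` bits of the assignment on the edge -/
def pcount (hk : M.IsKLocal k) (t : Fin T) (s : Fin k → Bool) : ℝ :=
  ∑ v ∈ M.edge t, bv (extCfg M hk t s v)

/-- mismatch count between configuration `y` and assignment `s` on edge `t` -/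
def Dmis (hk : M.IsKLocal k) (t : Fin T) (s : Fin k → Bool)
    (y : (Fin n ⊕ Fin m) → Bool) : ℝ :=
  ∑ v ∈ M.edge t, (bv (extCfg M hk t s v) + (1 - 2 * bv (extCfg M hk t s v)) * bv (y v))

/-- The DBM approximating the HBM, with coupling strength `lam`. -/
def dbm (hk : M.IsKLocal k) (lam : ℝ) : DBM n (2 ^ k * T) m where
  a := fun _ => 0
  c := fun _ => 0
  b := fun u =>
    if Canon M k (unitEquiv k T u).2 (unitEquiv k T u).1 then
      cts M hk (unitEquiv k T u).2 (unitEquiv k T u).1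
        - lam * pcount M hk (unitEquiv k T u).2 (unitEquiv k T u).1
    else -lam
  W := fun i u =>
    if Canon M k (unitEquiv k T u).2 (unitEquiv k T u).1 ∧ Sum.inl i ∈ M.edge (unitEquiv k T u).2
    then lam * (2 * bv (extCfg M hk (unitEquiv k T u).2 (unitEquiv k T u).1 (Sum.inl i)) - 1)
    else 0
  U := fun u l =>
    if Canon M k (unitEquiv k T u).2 (unitEquiv k T u).1 ∧ Sum.inr l ∈ M.edge (unitEquiv k T u).2
    then lam * (2 * bv (extCfg M hk (unitEquiv k T u).2 (unitEquiv k T u).1 (Sum.inr l)) - 1)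
    else 0

/-- generic output formula for a DBM with zero visible and deep biases -/
lemma output_eq' {n m1 m2 : ℕ} (D : DBM n m1 m2) (ha : ∀ i, D.a i = 0)
    (hc : ∀ l, D.c l = 0) (x : Fin n → Bool) :
    D.output x = ∑ g : Fin m2 → Bool, ∏ j,
      (1 + Real.exp (D.b j + ∑ i, D.W i j * bv (x i) + ∑ l, D.U j l * bv (g l))) := by
  unfold DBM.output
  rw [Finset.sum_comm]
  refine Finset.sum_congr rfl fun g _ => ?_
  set θ : Fin m1 → ℝ :=
    fun j => D.b j + ∑ i, D.W i j * bv (x i) + ∑ l, D.U j l * bv (g l) with hθ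
  calc ∑ h : Fin m1 → Bool, Real.exp (-D.energy x h g)
      = ∑ h : Fin m1 → Bool, ∏ j, Real.exp (θ j * bv (h j)) := by
        refine Finset.sum_congr rfl fun h _ => ?_
        rw [← Real.exp_sum]
        congr 1
        unfold DBM.energy
        simp only [ha, hc, zero_mul, Finset.sum_const_zero, neg_zero, hθ, add_mul,
          Finset.sum_add_distrib, Finset.sum_mul]
        have h1 : ∑ j, ∑ i, D.W i j * bv (x i) * bv (h j)
            = ∑ i, ∑ j, D.W i j * bv (x i) * bv (h j) := Finset.sum_comm
        have h2 : ∀ j, ∑ l, D.U j l * bv (g l) * bv (h j)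
            = ∑ l, D.U j l * bv (h j) * bv (g l) := by
          intro j; exact Finset.sum_congr rfl fun l _ => by ring
        rw [h1]
        simp only [h2]
        ring
    _ = ∏ j, (Real.exp (θ j * bv false) + Real.exp (θ j * bv true)) :=
        sum_prod_bool (fun j b => Real.exp (θ j * bv b))
    _ = _ := Finset.prod_congr rfl fun j _ => by simp [bv, hθ]

/-- splitting a sum over an edge into visible and hidden parts -/
lemma edge_sum (t : Fin T) (f : (Fin n ⊕ Fin m) → ℝ) :
    (∑ i : Fin n, if Sum.inl i ∈ M.edge t then f (Sum.inl i) else 0)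
      + (∑ l : Fin m, if Sum.inr l ∈ M.edge t then f (Sum.inr l) else 0)
    = ∑ v ∈ M.edge t, f v := by
  rw [← Fintype.sum_sum_type (fun v : Fin n ⊕ Fin m => if v ∈ M.edge t then f v else 0)]
  rw [Finset.sum_ite_mem, Finset.univ_inter]

/-- the effective field of a unit of the constructed DBM -/
lemma tau_eq (hk : M.IsKLocal k) (lam : ℝ) (u : Fin (2 ^ k * T))
    (x : Fin n → Bool) (g : Fin m → Bool) :
    (dbm M hk lam).b u + ∑ i, (dbm M hk lam).W i u * bv (x i)
        + ∑ l, (dbm M hk lam).U u l * bv (g l)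
      = if Canon M k (unitEquiv k T u).2 (unitEquiv k T u).1 then
          cts M hk (unitEquiv k T u).2 (unitEquiv k T u).1
            - lam * Dmis M hk (unitEquiv k T u).2 (unitEquiv k T u).1 (Sum.elim x g)
        else -lam := by
  set s := (unitEquiv k T u).1
  set t := (unitEquiv k T u).2
  by_cases hC : Canon M k t s
  · rw [if_pos hC]
    have hW : ∀ i, (dbm M hk lam).W i u * bv (x i)
        = if Sum.inl i ∈ M.edge t then
            (lam * (2 * bv (extCfg M hk t s (Sum.inl i)) - 1)) * bv (Sum.elim x g (Sum.inl i))
          else 0 := by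
      intro i
      simp only [dbm]
      by_cases hi : Sum.inl i ∈ M.edge t
      · rw [if_pos ⟨hC, hi⟩, if_pos hi]; rfl
      · rw [if_neg (fun hh => hi hh.2), if_neg hi, zero_mul]
    have hU : ∀ l, (dbm M hk lam).U u l * bv (g l)
        = if Sum.inr l ∈ M.edge t then
            (lam * (2 * bv (extCfg M hk t s (Sum.inr l)) - 1)) * bv (Sum.elim x g (Sum.inr l))
          else 0 := by
      intro l
      simp only [dbm]
      by_cases hl : Sum.inr l ∈ M.edge t
      · rw [if_pos ⟨hC, hl⟩, if_pos hl]; rfl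
      · rw [if_neg (fun hh => hl hh.2), if_neg hl, zero_mul]
    simp only [hW, hU]
    rw [add_assoc,
      edge_sum M t (fun v => (lam * (2 * bv (extCfg M hk t s v) - 1)) * bv (Sum.elim x g v))]
    have hb : (dbm M hk lam).b u = cts M hk t s - lam * pcount M hk t s := by
      simp only [dbm]; rw [if_pos hC]
    rw [hb]
    have hDm : Dmis M hk t s (Sum.elim x g) = pcount M hk t s
        + ∑ v ∈ M.edge t, (1 - 2 * bv (extCfg M hk t s v)) * bv (Sum.elim x g v) := by
      unfold Dmis pcount; rw [Finset.sum_add_distrib]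
    have hS : (∑ v ∈ M.edge t, lam * (2 * bv (extCfg M hk t s v) - 1) * bv (Sum.elim x g v))
        + lam * ∑ v ∈ M.edge t, (1 - 2 * bv (extCfg M hk t s v)) * bv (Sum.elim x g v) = 0 := by
      rw [Finset.mul_sum, ← Finset.sum_add_distrib]
      exact Finset.sum_eq_zero fun v _ => by ring
    rw [hDm, mul_add]
    linarith
  · rw [if_neg hC]
    have hb : (dbm M hk lam).b u = -lam := by simp only [dbm]; rw [if_neg hC]
    have hW : ∀ i, (dbm M hk lam).W i u = 0 := by
      intro i; simp only [dbm]; rw [if_neg (fun hh => hC hh.1)]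
    have hU : ∀ l, (dbm M hk lam).U u l = 0 := by
      intro l; simp only [dbm]; rw [if_neg (fun hh => hC hh.1)]
    simp [hb, hW, hU]


lemma Dmis_term (b c : Bool) : bv b + (1 - 2 * bv b) * bv c = if b = c then 0 else 1 := by
  cases b <;> cases c <;> norm_num [bv]

lemma Dmis_term_nonneg (b c : Bool) : 0 ≤ bv b + (1 - 2 * bv b) * bv c := by
  rw [Dmis_term]; split <;> norm_num

lemma Dmis_eq_zero (hk : M.IsKLocal k) (t : Fin T) (s : Fin k → Bool)
    (y : (Fin n ⊕ Fin m) → Bool) (h : ∀ v ∈ M.edge t, extCfg M hk t s v = y v) :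
    Dmis M hk t s y = 0 := by
  refine Finset.sum_eq_zero fun v hv => ?_
  rw [Dmis_term, if_pos (h v hv)]

lemma one_le_Dmis (hk : M.IsKLocal k) (t : Fin T) (s : Fin k → Bool)
    (y : (Fin n ⊕ Fin m) → Bool) (h : ¬ ∀ v ∈ M.edge t, extCfg M hk t s v = y v) :
    1 ≤ Dmis M hk t s y := by
  push_neg at h
  obtain ⟨v, hv, hne⟩ := h
  have h1 : bv (extCfg M hk t s v) + (1 - 2 * bv (extCfg M hk t s v)) * bv (y v) = 1 := by
    rw [Dmis_term, if_neg hne]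
  calc (1:ℝ) = bv (extCfg M hk t s v) + (1 - 2 * bv (extCfg M hk t s v)) * bv (y v) := h1.symm
    _ ≤ Dmis M hk t s y :=
        Finset.single_le_sum (fun w _ => Dmis_term_nonneg _ _) hv

lemma tendsto_one_add_exp_atBot {f : ℝ → ℝ} (hf : Tendsto f atTop atBot) :
    Tendsto (fun lam => 1 + Real.exp (f lam)) atTop (nhds 1) := by
  have h := Real.tendsto_exp_atBot.comp hf
  simpa using tendsto_const_nhds.add h

lemma tendsto_sub_mul_atBot (c d : ℝ) (hd : 1 ≤ d) :
    Tendsto (fun lam : ℝ => c - lam * d) atTop atBot := by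
  have h1 : Tendsto (fun lam : ℝ => lam * d) atTop atTop :=
    Tendsto.atTop_mul_const (by linarith) tendsto_id
  have h2 := tendsto_neg_atTop_atBot.comp h1
  simpa [sub_eq_add_neg] using tendsto_atBot_add_const_left atTop c h2

lemma prod_fac_tendsto (hk : M.IsKLocal k) (x : Fin n → Bool) (g : Fin m → Bool) :
    Tendsto (fun lam => ∏ u : Fin (2 ^ k * T),
        (1 + Real.exp ((dbm M hk lam).b u + ∑ i, (dbm M hk lam).W i u * bv (x i)
          + ∑ l, (dbm M hk lam).U u l * bv (g l)))) atTop
      (nhds (∏ t, Real.exp (G M t (Sum.elim x g)))) := by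
  set y := Sum.elim x g with hy
  have hL : ∏ t, Real.exp (G M t y)
      = ∏ u : Fin (2 ^ k * T),
          (if (unitEquiv k T u).1 = canon M k (unitEquiv k T u).2 y then
            Real.exp (G M (unitEquiv k T u).2 y) else 1) := by
    rw [Fintype.prod_equiv (unitEquiv k T) _
      (fun p : (Fin k → Bool) × Fin T =>
        if p.1 = canon M k p.2 y then Real.exp (G M p.2 y) else 1) (fun u => rfl)]
    rw [Fintype.prod_prod_type, Finset.prod_comm]
    refine Finset.prod_congr rfl fun t _ => ?_
    rw [Finset.prod_ite_eq' Finset.univ (canon M k t y) (fun _ => Real.exp (G M t y))]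
    simp
  rw [hL]
  refine tendsto_finset_prod _ fun u _ => ?_
  simp only [tau_eq M hk _ u x g]
  set s := (unitEquiv k T u).1
  set t := (unitEquiv k T u).2
  by_cases hs : s = canon M k t y
  · rw [if_pos hs]
    have hC : Canon M k t s := hs ▸ canon_isCanon M t y
    have hmatch : ∀ v ∈ M.edge t, extCfg M hk t s v = y v := by
      intro v hv; rw [hs]; exact extCfg_canon M hk t y hv
    have hD : Dmis M hk t s y = 0 := Dmis_eq_zero M hk t s y hmatch
    have hval : ∀ lam : ℝ,
        (if Canon M k t s then cts M hk t s - lam * Dmis M hk t s y else -lam)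
          = cts M hk t s := by
      intro lam; rw [if_pos hC, hD, mul_zero, sub_zero]
    simp only [← hy, hval]
    have : 1 + Real.exp (cts M hk t s) = Real.exp (G M t y) := by
      rw [cts, Real.exp_log (expG_sub_one_pos M t _)]
      rw [hs, G_canon M hk t y]
      ring
    rw [this]
    exact tendsto_const_nhds
  · rw [if_neg hs]
    by_cases hC : Canon M k t s
    · have hnm : ¬ ∀ v ∈ M.edge t, extCfg M hk t s v = y v := by
        intro hm
        exact hs (canon_unique M hk t s y hC (fun v hv => hm v hv))
      have hD : 1 ≤ Dmis M hk t s y := one_le_Dmis M hk t s y hnm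
      have hval : ∀ lam : ℝ,
          (if Canon M k t s then cts M hk t s - lam * Dmis M hk t s y else -lam)
            = cts M hk t s - lam * Dmis M hk t s y := fun lam => if_pos hC
      simp only [← hy, hval]
      exact tendsto_one_add_exp_atBot (tendsto_sub_mul_atBot _ _ hD)
    · have hval : ∀ lam : ℝ,
          (if Canon M k t s then cts M hk t s - lam * Dmis M hk t s y else -lam)
            = -lam := fun lam => if_neg hC
      simp only [← hy, hval]
      exact tendsto_one_add_exp_atBot tendsto_neg_atTop_atBot

/-- total energy shift -/
def Cs : ℝ := ∑ t, (Finset.univ.sup' (Finset.univ_nonempty) (M.F t) + 1)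

lemma prodG (y : (Fin n ⊕ Fin m) → Bool) :
    ∏ t, Real.exp (G M t y) = Real.exp (Cs M) * Real.exp (-∑ t, M.F t y) := by
  rw [← Real.exp_sum, ← Real.exp_add]
  congr 1
  unfold G Cs
  rw [← Finset.sum_neg_distrib, ← Finset.sum_add_distrib]
  exact Finset.sum_congr rfl fun t _ => by ring

lemma output_tendsto (hk : M.IsKLocal k) (x : Fin n → Bool) :
    Tendsto (fun lam => (dbm M hk lam).output x) atTop
      (nhds (Real.exp (Cs M) * M.output x)) := by
  have he : ∀ lam, (dbm M hk lam).output x = ∑ g : Fin m → Bool,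
      ∏ u : Fin (2 ^ k * T), (1 + Real.exp ((dbm M hk lam).b u
        + ∑ i, (dbm M hk lam).W i u * bv (x i) + ∑ l, (dbm M hk lam).U u l * bv (g l))) :=
    fun lam => output_eq' _ (fun _ => rfl) (fun _ => rfl) x
  simp only [he]
  have hlim : ∑ g : Fin m → Bool, ∏ t, Real.exp (G M t (Sum.elim x g))
      = Real.exp (Cs M) * M.output x := by
    simp only [prodG]
    rw [← Finset.mul_sum]
    rfl
  rw [← hlim]
  exact tendsto_finset_sum _ fun g _ => prod_fac_tendsto M hk x g

lemma hbm_output_pos (x : Fin n → Bool) : 0 < M.output x :=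
  Finset.sum_pos (fun h _ => Real.exp_pos _) Finset.univ_nonempty

lemma dist_tendsto (hk : M.IsKLocal k) (x : Fin n → Bool) :
    Tendsto (fun lam => (dbm M hk lam).dist x) atTop (nhds (M.dist x)) := by
  have hd : Tendsto (fun lam => ∑ y, (dbm M hk lam).output y) atTop
      (nhds (Real.exp (Cs M) * ∑ y, M.output y)) := by
    rw [Finset.mul_sum]
    exact tendsto_finset_sum _ fun y _ => output_tendsto M hk y
  have hne : Real.exp (Cs M) * ∑ y, M.output y ≠ 0 :=
    ne_of_gt (mul_pos (Real.exp_pos _)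
      (Finset.sum_pos (fun y _ => hbm_output_pos M y) Finset.univ_nonempty))
  have h := (output_tendsto M hk x).div hd hne
  have heq : (Real.exp (Cs M) * M.output x) / (Real.exp (Cs M) * ∑ y, M.output y)
      = M.dist x := by
    rw [mul_div_mul_left _ _ (Real.exp_ne_zero _)]; rfl
  rw [heq] at h
  exact h

lemma tv_tendsto (hk : M.IsKLocal k) :
    Tendsto (fun lam => tvDist (dbm M hk lam).dist M.dist) atTop (nhds 0) := by
  have h1 : ∀ x : Fin n → Bool, Tendsto
      (fun lam => |(dbm M hk lam).dist x - M.dist x|) atTop (nhds 0) := by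
    intro x
    have h := ((dist_tendsto M hk x).sub
      (tendsto_const_nhds : Tendsto (fun _ : ℝ => M.dist x) atTop (nhds (M.dist x)))).abs
    simpa using h
  have h2 := (tendsto_finset_sum Finset.univ fun x _ => h1 x).const_mul ((1:ℝ)/2)
  simpa [tvDist] using h2

variable {k' : ℕ}

lemma card_filter_deg (hdeg : ∀ v, M.deg v ≤ k') (v : Fin n ⊕ Fin m) :
    (Finset.univ.filter (fun t => v ∈ M.edge t)).card ≤ k' := by
  have h := hdeg v
  unfold HBM.deg at h
  convert h using 2

lemma degVis_le (hk : M.IsKLocal k) (hdeg : ∀ v, M.deg v ≤ k') (lam : ℝ) (i : Fin n) :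
    (dbm M hk lam).degVis i ≤ k' * 2 ^ k := by
  unfold DBM.degVis
  have hsub : (Finset.univ.filter fun u => (dbm M hk lam).W i u ≠ 0)
      ⊆ Finset.univ.filter (fun u => Sum.inl i ∈ M.edge (unitEquiv k T u).2) := by
    intro u hu
    simp only [Finset.mem_filter, Finset.mem_univ, true_and] at *
    by_contra hmem
    apply hu
    simp only [dbm]
    rw [if_neg (fun hh => hmem hh.2)]
  refine le_trans (Finset.card_le_card hsub) ?_
  have hc2 : (Finset.univ.filter (fun u => Sum.inl i ∈ M.edge (unitEquiv k T u).2)).card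
      ≤ ((Finset.univ : Finset (Fin k → Bool))
          ×ˢ (Finset.univ.filter (fun t => Sum.inl i ∈ M.edge t))).card := by
    refine Finset.card_le_card_of_injOn (fun u => unitEquiv k T u) ?_
      ((unitEquiv k T).injective.injOn)
    intro u hu
    simp only [Finset.mem_coe, Finset.mem_filter, Finset.mem_univ, true_and] at hu
    rw [Finset.mem_coe, Finset.mem_product]
    exact ⟨Finset.mem_univ _, by simp only [Finset.mem_filter, Finset.mem_univ, true_and]; exact hu⟩
  refine le_trans hc2 ?_
  rw [Finset.card_product]
  have h1 : (Finset.univ : Finset (Fin k → Bool)).card = 2 ^ k := by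
    simp [Finset.card_univ]
  rw [h1, Nat.mul_comm]
  exact Nat.mul_le_mul_right _ (card_filter_deg M hdeg (Sum.inl i))

lemma degDeep_le (hk : M.IsKLocal k) (hdeg : ∀ v, M.deg v ≤ k') (lam : ℝ) (l : Fin m) :
    (dbm M hk lam).degDeep l ≤ k' * 2 ^ k := by
  unfold DBM.degDeep
  have hsub : (Finset.univ.filter fun u => (dbm M hk lam).U u l ≠ 0)
      ⊆ Finset.univ.filter (fun u => Sum.inr l ∈ M.edge (unitEquiv k T u).2) := by
    intro u hu
    simp only [Finset.mem_filter, Finset.mem_univ, true_and] at *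
    by_contra hmem
    apply hu
    simp only [dbm]
    rw [if_neg (fun hh => hmem hh.2)]
  refine le_trans (Finset.card_le_card hsub) ?_
  have hc2 : (Finset.univ.filter (fun u => Sum.inr l ∈ M.edge (unitEquiv k T u).2)).card
      ≤ ((Finset.univ : Finset (Fin k → Bool))
          ×ˢ (Finset.univ.filter (fun t => Sum.inr l ∈ M.edge t))).card := by
    refine Finset.card_le_card_of_injOn (fun u => unitEquiv k T u) ?_
      ((unitEquiv k T).injective.injOn)
    intro u hu
    simp only [Finset.mem_coe, Finset.mem_filter, Finset.mem_univ, true_and] at hu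
    rw [Finset.mem_coe, Finset.mem_product]
    exact ⟨Finset.mem_univ _, by simp only [Finset.mem_filter, Finset.mem_univ, true_and]; exact hu⟩
  refine le_trans hc2 ?_
  rw [Finset.card_product]
  have h1 : (Finset.univ : Finset (Fin k → Bool)).card = 2 ^ k := by
    simp [Finset.card_univ]
  rw [h1, Nat.mul_comm]
  exact Nat.mul_le_mul_right _ (card_filter_deg M hdeg (Sum.inr l))

lemma degMid_le (hk : M.IsKLocal k) (hdeg : ∀ v, M.deg v ≤ k') (lam : ℝ)
    (u : Fin (2 ^ k * T)) : (dbm M hk lam).degMid u ≤ k' * 2 ^ k := by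
  unfold DBM.degMid
  set t := (unitEquiv k T u).2 with ht
  set A := Finset.univ.filter (fun i : Fin n => Sum.inl i ∈ M.edge t) with hA
  set B := Finset.univ.filter (fun l : Fin m => Sum.inr l ∈ M.edge t) with hB
  have hWsub : (Finset.univ.filter fun i => (dbm M hk lam).W i u ≠ 0) ⊆ A := by
    intro i hi
    simp only [hA, Finset.mem_filter, Finset.mem_univ, true_and] at *
    by_contra hmem
    apply hi
    simp only [dbm]
    rw [if_neg (fun hh => hmem hh.2)]
  have hUsub : (Finset.univ.filter fun l => (dbm M hk lam).U u l ≠ 0) ⊆ B := by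
    intro l hl
    simp only [hB, Finset.mem_filter, Finset.mem_univ, true_and] at *
    by_contra hmem
    apply hl
    simp only [dbm]
    rw [if_neg (fun hh => hmem hh.2)]
  have hle : (Finset.univ.filter fun i => (dbm M hk lam).W i u ≠ 0).card
      + (Finset.univ.filter fun l => (dbm M hk lam).U u l ≠ 0).card
      ≤ A.card + B.card :=
    Nat.add_le_add (Finset.card_le_card hWsub) (Finset.card_le_card hUsub)
  by_cases hE : A = ∅ ∧ B = ∅
  · rw [hE.1, hE.2] at hle
    simp only [Finset.card_empty] at hle
    omega
  · -- there is a node in the edge, so 1 ≤ k'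
    have hv0 : ∃ v : Fin n ⊕ Fin m, v ∈ M.edge t := by
      rcases not_and_or.mp hE with h | h
      · obtain ⟨i, hi⟩ := Finset.nonempty_iff_ne_empty.mpr h
        simp only [hA, Finset.mem_filter] at hi
        exact ⟨Sum.inl i, hi.2⟩
      · obtain ⟨l, hl⟩ := Finset.nonempty_iff_ne_empty.mpr h
        simp only [hB, Finset.mem_filter] at hl
        exact ⟨Sum.inr l, hl.2⟩
    obtain ⟨v0, hv0⟩ := hv0
    have hk'1 : 1 ≤ k' := by
      refine le_trans ?_ (hdeg v0)
      unfold HBM.deg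
      rw [Nat.succ_le_iff, Finset.card_pos]
      exact ⟨t, by simp [hv0]⟩
    have hAB : A.card + B.card ≤ (M.edge t).card := by
      have hdis : Disjoint (A.image Sum.inl) (B.image Sum.inr) := by
        simp only [Finset.disjoint_left, Finset.mem_image]
        rintro v ⟨i, _, rfl⟩ ⟨l, _, h⟩
        exact absurd h (by simp)
      have himg : A.image Sum.inl ∪ B.image Sum.inr ⊆ M.edge t := by
        intro v hv
        rcases Finset.mem_union.mp hv with h | h <;>
          obtain ⟨w, hw, rfl⟩ := Finset.mem_image.mp h
        · exact (Finset.mem_filter.mp hw).2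
        · exact (Finset.mem_filter.mp hw).2
      calc A.card + B.card
          = (A.image Sum.inl).card + (B.image Sum.inr).card := by
            rw [Finset.card_image_of_injective _ Sum.inl_injective,
              Finset.card_image_of_injective _ Sum.inr_injective]
        _ = (A.image Sum.inl ∪ B.image Sum.inr).card :=
            (Finset.card_union_of_disjoint hdis).symm
        _ ≤ (M.edge t).card := Finset.card_le_card himg
    calc (Finset.univ.filter fun i => (dbm M hk lam).W i u ≠ 0).card
          + (Finset.univ.filter fun l => (dbm M hk lam).U u l ≠ 0).card
        ≤ A.card + B.card := hle
      _ ≤ (M.edge t).card := hAB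
      _ ≤ k := hk t
      _ ≤ 2 ^ k := (Nat.lt_two_pow_self (n := k)).le
      _ ≤ k' * 2 ^ k := Nat.le_mul_of_pos_left _ hk'1

end

end Stoq14

open StoqPaper
theorem statement_14 (n m T k k' : ℕ) (M : HBM n m T)
    (hk : M.IsKLocal k) (hdeg : ∀ v, M.deg v ≤ k') :
    ∀ ε : ℝ, 0 < ε →
      ∃ (m₁ : ℕ) (D : DBM n m₁ m),
        m₁ ≤ 2 ^ k * T ∧
        (∀ i, D.degVis i ≤ k' * 2 ^ k) ∧
        (∀ j, D.degMid j ≤ k' * 2 ^ k) ∧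
        (∀ l, D.degDeep l ≤ k' * 2 ^ k) ∧
        tvDist D.dist M.dist ≤ ε := by
  intro ε hε
  classical
  have hev : ∀ᶠ lam in Filter.atTop,
      tvDist (Stoq14.dbm M hk lam).dist M.dist < ε :=
    (Stoq14.tv_tendsto M hk).eventually_lt_const hε
  obtain ⟨lam, hlam⟩ := hev.exists
  exact ⟨2 ^ k * T, Stoq14.dbm M hk lam, le_refl _,
    fun i => Stoq14.degVis_le M hk hdeg lam i,
    fun j => Stoq14.degMid_le M hk hdeg lam j,
    fun l => Stoq14.degDeep_le M hk hdeg lam l, hlam.le⟩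
end
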